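/- arXiv:2404.03812 — 7 statements merged into one kernel-verified Lean document; each statement's English description precedes it below -/
import Mathlib

section
/- Let r be a vertex of a connected δ-thin graph G, let R and k be integers, and let C_r be an (r,R)-cover of G with |C_r| = 2k−1. Let π_r be the profile of length 2k consisting of all end-vertices of the paths in C_r (namely r together with the 2k−1 other end-vertices), and let P_r be a pairing of π_r for which some vertex m satisfies (x|y)_m ≤ 2δ + ½ for every pair {x,y} ∈ P_r. Then the collection S(P_r) = { σ(x,y) : {x,y} ∈ P_r } of k isometric paths (one between each pair) is an (R + 3δ + 1)-cover of G. -/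
open SimpleGraph

/-- The Gromov product `(x|y)_z = ½(d(x,z) + d(z,y) − d(x,y))` in a graph. -/
noncomputable def gromov {V : Type*} (G : SimpleGraph V) (x y z : V) : ℝ :=
  ((G.dist x z : ℝ) + (G.dist z y : ℝ) - (G.dist x y : ℝ)) / 2

/-- A walk is geodesic (an isometric path) if its length equals the
distance between its end-vertices. -/
def IsGeodesicWalk {V : Type*} (G : SimpleGraph V) {u v : V} (w : G.Walk u v) : Prop :=
  w.length = G.dist u v

/-- `G` is `δ`-thin: for all vertices `x, y, z`, all isometric paths
`pxy = σ(x,y)`, `pxz = σ(x,z)`, `pyz = σ(y,z)` and every vertex `p = pxy.getVert i`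
of `σ(x,y)` (at distance `i` from `x`): if `i ≤ (y|z)_x` then `d(p,q) ≤ δ` where `q` is the
vertex of `σ(x,z)` at distance `i` from `x`, and if `i ≥ (y|z)_x` then `d(p,q') ≤ δ` where
`q'` is the vertex of `σ(y,z)` at distance `d(y,p) = d(x,y) − i` from `y`. -/
def IsThin {V : Type*} (G : SimpleGraph V) (δ : ℝ) : Prop :=
  ∀ (x y z : V) (pxy : G.Walk x y) (pxz : G.Walk x z) (pyz : G.Walk y z),
    IsGeodesicWalk G pxy → IsGeodesicWalk G pxz → IsGeodesicWalk G pyz →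
    ∀ i : ℕ, i ≤ pxy.length →
      ((i : ℝ) ≤ gromov G y z x →
        (G.dist (pxy.getVert i) (pxz.getVert i) : ℝ) ≤ δ) ∧
      (gromov G y z x ≤ (i : ℝ) →
        (G.dist (pxy.getVert i) (pyz.getVert (pxy.length - i)) : ℝ) ≤ δ)

/-- An isometric path of `G`, recorded together with its two end-vertices. -/
structure IsomPath {V : Type*} (G : SimpleGraph V) where
  first : V
  last : V
  walk : G.Walk first last
  isom : walk.length = G.dist first last

/-- A collection `C` of isometric paths is an `R`-cover of `G` if every vertex of `G`
is within distance `R` of the vertex set of some path in `C`. -/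
def IsCover {V : Type*} (G : SimpleGraph V) (R : ℕ) (C : List (IsomPath G)) : Prop :=
  ∀ v : V, ∃ P ∈ C, ∃ w ∈ P.walk.support, G.dist v w ≤ R

/-- `P` is a pairing of the even profile `π`: the entries of `π` (with multiplicity)
are partitioned into the pairs listed in `P`. -/
def IsPairing {V : Type*} (π : List V) (P : List (V × V)) : Prop :=
  (π : Multiset V) = (P.map Prod.fst : List V) + (P.map Prod.snd : List V)

/-- `F_π(v) = Σ_{x ∈ π} d(v,x)`. -/
noncomputable def Fsum {V : Type*} (G : SimpleGraph V) (π : List V) (v : V) : ℕ :=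
  (π.map fun x => G.dist v x).sum

/-- `D_π(P) = Σ_{{a,b} ∈ P} d(a,b)`. -/
noncomputable def Dsum {V : Type*} (G : SimpleGraph V) (P : List (V × V)) : ℕ :=
  (P.map fun p => G.dist p.1 p.2).sum

private lemma aux_getVert_mem_support {V : Type*} {G : SimpleGraph V} {a b : V}
    (w : G.Walk a b) (n : ℕ) : w.getVert n ∈ w.support := by
  rcases le_or_gt n w.length with h | h
  · exact SimpleGraph.Walk.mem_support_iff_exists_getVert.mpr ⟨n, rfl, h⟩
  · rw [w.getVert_of_length_le h.le]
    exact SimpleGraph.Walk.end_mem_support w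

private lemma aux_dist_getVert {V : Type*} {G : SimpleGraph V} (hG : G.Connected)
    {a b : V} (w : G.Walk a b) (i k : ℕ) :
    G.dist (w.getVert i) (w.getVert (i + k)) ≤ k := by
  induction k with
  | zero => simp
  | succ n ih =>
    have h1 : G.dist (w.getVert (i + n)) (w.getVert (i + n + 1)) ≤ 1 := by
      rcases lt_or_ge (i + n) w.length with h | h
      · exact SimpleGraph.dist_le (SimpleGraph.Walk.cons (w.adj_getVert_succ h) SimpleGraph.Walk.nil)
      · rw [w.getVert_of_length_le h, w.getVert_of_length_le (by omega)]
        rw [SimpleGraph.dist_self]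
        omega
    have h2 := hG.dist_triangle (u := w.getVert i) (v := w.getVert (i + n))
      (w := w.getVert (i + n + 1))
    have h3 : i + (n + 1) = i + n + 1 := by omega
    rw [h3]
    omega

private lemma gromov_comm {V : Type*} (G : SimpleGraph V) (a b c : V) :
    gromov G a b c = gromov G b a c := by
  unfold gromov
  rw [SimpleGraph.dist_comm (u := a) (v := c), SimpleGraph.dist_comm (u := c) (v := b),
    SimpleGraph.dist_comm (u := a) (v := b)]
  ring

private lemma aux_pair_of_mem {V : Type*} {π : List V} {P : List (V × V)}
    (h : IsPairing π P) {v : V} (hv : v ∈ π) : ∃ p ∈ P, p.1 = v ∨ p.2 = v := by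
  have hv' : v ∈ (π : Multiset V) := by exact_mod_cast hv
  rw [h, Multiset.mem_add] at hv'
  rcases hv' with h' | h'
  · obtain ⟨p, hp, he⟩ := List.mem_map.mp (by exact_mod_cast h' : v ∈ P.map Prod.fst)
    exact ⟨p, hp, Or.inl he⟩
  · obtain ⟨p, hp, he⟩ := List.mem_map.mp (by exact_mod_cast h' : v ∈ P.map Prod.snd)
    exact ⟨p, hp, Or.inr he⟩

set_option maxHeartbeats 1000000 in
/-- Let `C_r` (given as a list `L` of isometric paths rooted at `r`, paired with their
other end-vertices) be an `(r,R)`-cover of the connected `δ`-thin graph `G` with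
`|C_r| = 2k−1`, let `π_r = r :: (other end-vertices)` be the profile of length `2k` of
all end-vertices of paths of `C_r`, and let `P` be a pairing of `π_r` such that some
vertex `m` satisfies `(x|y)_m ≤ 2δ + ½` for every pair `{x,y} ∈ P`. Then the collection
`S(P) = { τ(x,y) : {x,y} ∈ P }` of `k` isometric paths (one between each pair) is an
`(R + 3δ + 1)`-cover of `G`. -/
theorem stmt_3 {V : Type*} (G : SimpleGraph V) (hG : G.Connected)
    (δ : ℝ) (hδ : 0 ≤ δ) (hthin : IsThin G δ)
    (r : V) (R k : ℕ) (hk : 1 ≤ k)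
    (L : List ((x : V) × G.Walk r x))
    (hgeo : ∀ Q ∈ L, IsGeodesicWalk G Q.2)
    (hlen : L.length = 2 * k - 1)
    (hcov : ∀ v : V, ∃ Q ∈ L, ∃ w ∈ Q.2.support, G.dist v w ≤ R)
    (P : List (V × V)) (hP : IsPairing (r :: L.map Sigma.fst) P)
    (m : V) (hm : ∀ p ∈ P, gromov G p.1 p.2 m ≤ 2 * δ + 1 / 2)
    (τ : ∀ x y : V, G.Walk x y) (hτ : ∀ p ∈ P, IsGeodesicWalk G (τ p.1 p.2)) :
    ∀ u : V, ∃ p ∈ P, ∃ z ∈ (τ p.1 p.2).support,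
      (G.dist u z : ℝ) ≤ (R : ℝ) + 3 * δ + 1 := by
  intro u
  obtain ⟨Q, hQL, w, hwsup, hdw⟩ := hcov u
  obtain ⟨x, σ⟩ := Q
  have hσ : IsGeodesicWalk G σ := hgeo ⟨x, σ⟩ hQL
  obtain ⟨i, hwi, hil⟩ := SimpleGraph.Walk.mem_support_iff_exists_getVert.mp hwsup
  subst hwi
  -- the pair of the profile containing `x`, and the one containing `r`
  have hxpi : x ∈ (r :: L.map Sigma.fst) :=
    List.mem_cons_of_mem _ (List.mem_map_of_mem (f := Sigma.fst) hQL)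
  obtain ⟨p, hpP, hpx⟩ := aux_pair_of_mem hP hxpi
  obtain ⟨q, hqP, hqr⟩ := aux_pair_of_mem hP (List.mem_cons_self (a := r))
  have hpair : ∃ y : V, ∃ T : G.Walk x y, IsGeodesicWalk G T ∧
      (∀ n : ℕ, T.getVert n ∈ (τ p.1 p.2).support) ∧ gromov G x y m ≤ 2 * δ + 1 / 2 := by
    obtain ⟨a, b⟩ := p
    rcases hpx with h | h
    · have h' : a = x := h
      subst h'
      refine ⟨b, τ a b, ?_, ?_, ?_⟩
      · exact hτ (a, b) hpP
      · exact fun n => aux_getVert_mem_support _ n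
      · exact hm (a, b) hpP
    · have h' : b = x := h
      subst h'
      refine ⟨a, (τ a b).reverse, ?_, ?_, ?_⟩
      · show (τ a b).reverse.length = G.dist b a
        rw [SimpleGraph.Walk.length_reverse, SimpleGraph.dist_comm]
        exact hτ (a, b) hpP
      · intro n
        have hms := aux_getVert_mem_support (τ a b).reverse n
        rwa [SimpleGraph.Walk.support_reverse, List.mem_reverse] at hms
      · rw [gromov_comm]
        exact hm (a, b) hpP
  have hrpair : ∃ y₀ : V, ∃ T0 : G.Walk r y₀, IsGeodesicWalk G T0 ∧
      (∀ n : ℕ, T0.getVert n ∈ (τ q.1 q.2).support) ∧ gromov G r y₀ m ≤ 2 * δ + 1 / 2 := by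
    obtain ⟨a, b⟩ := q
    rcases hqr with h | h
    · have h' : a = r := h
      subst h'
      exact ⟨b, τ a b, hτ (a, b) hqP, fun n => aux_getVert_mem_support _ n, hm (a, b) hqP⟩
    · have h' : b = r := h
      subst h'
      refine ⟨a, (τ a b).reverse, ?_, ?_, ?_⟩
      · show (τ a b).reverse.length = G.dist b a
        rw [SimpleGraph.Walk.length_reverse, SimpleGraph.dist_comm]
        exact hτ (a, b) hqP
      · intro n
        have hms := aux_getVert_mem_support (τ a b).reverse n
        rwa [SimpleGraph.Walk.support_reverse, List.mem_reverse] at hms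
      · rw [gromov_comm]
        exact hm (a, b) hqP
  obtain ⟨y, T, hT, hTsup, hgxy⟩ := hpair
  obtain ⟨y0, T0, hT0, hT0sup, hgr⟩ := hrpair
  obtain ⟨W1, hW1⟩ := hG.exists_walk_length_eq_dist x y0
  obtain ⟨W2, hW2⟩ := hG.exists_walk_length_eq_dist r y
  have hW1' : IsGeodesicWalk G W1 := hW1
  have hW2' : IsGeodesicWalk G W2 := hW2
  have hsigma : σ.length = G.dist r x := hσ
  have hdw' : (G.dist u (σ.getVert i) : ℝ) ≤ (R : ℝ) := by exact_mod_cast hdw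
  -- Case 1 : i ≤ (x|y0)_r
  rcases le_or_gt (i : ℝ) (gromov G x y0 r) with hc1 | hc1
  · have hth := (hthin r x y0 σ T0 W1 hσ hT0 hW1' i hil).1 hc1
    refine ⟨q, hqP, T0.getVert i, hT0sup i, ?_⟩
    have A1 : G.dist u (T0.getVert i) ≤
        G.dist u (σ.getVert i) + G.dist (σ.getVert i) (T0.getVert i) := hG.dist_triangle
    have A1' : (G.dist u (T0.getVert i) : ℝ) ≤
        (G.dist u (σ.getVert i) : ℝ) + (G.dist (σ.getVert i) (T0.getVert i) : ℝ) := by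
      exact_mod_cast A1
    linarith
  -- Case 2 : (x|y)_r ≤ i
  rcases le_or_gt (gromov G x y r) (i : ℝ) with hc2 | hc2
  · have hth := (hthin r x y σ W2 T hσ hW2' hT i hil).2 hc2
    refine ⟨p, hpP, T.getVert (σ.length - i), hTsup _, ?_⟩
    have A1 : G.dist u (T.getVert (σ.length - i)) ≤
        G.dist u (σ.getVert i) + G.dist (σ.getVert i) (T.getVert (σ.length - i)) :=
      hG.dist_triangle
    have A1' : (G.dist u (T.getVert (σ.length - i)) : ℝ) ≤
        (G.dist u (σ.getVert i) : ℝ) +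
          (G.dist (σ.getVert i) (T.getVert (σ.length - i)) : ℝ) := by
      exact_mod_cast A1
    linarith
  -- middle zone : (x|y0)_r < i < (x|y)_r.  Gap between the two products is ≤ 4δ+1.
  have e1 : gromov G x y r = ((G.dist x r : ℝ) + G.dist r y - G.dist x y) / 2 := rfl
  have e2 : gromov G x y0 r = ((G.dist x r : ℝ) + G.dist r y0 - G.dist x y0) / 2 := rfl
  have e3 : gromov G x y m = ((G.dist x m : ℝ) + G.dist m y - G.dist x y) / 2 := rfl
  have e4 : gromov G r y0 m = ((G.dist r m : ℝ) + G.dist m y0 - G.dist r y0) / 2 := rfl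
  have t1 : (G.dist r y : ℝ) ≤ G.dist r m + G.dist m y := by exact_mod_cast hG.dist_triangle
  have t2 : (G.dist x y0 : ℝ) ≤ G.dist x m + G.dist m y0 := by exact_mod_cast hG.dist_triangle
  have hgap : gromov G x y r - gromov G x y0 r ≤ 4 * δ + 1 := by
    rw [e1, e2]
    rw [e3] at hgxy
    rw [e4] at hgr
    linarith
  rcases le_or_gt (i : ℝ) ((gromov G x y0 r + gromov G x y r) / 2) with hmid | hmid
  · -- lower half : jump down to j1 = ⌊(x|y0)_r⌋ and use the pair of r
    have t2n : G.dist x y0 ≤ G.dist x r + G.dist r y0 := hG.dist_triangle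
    set j1 : ℕ := (G.dist x r + G.dist r y0 - G.dist x y0) / 2 with hj1def
    have hn1c : ((G.dist x r + G.dist r y0 - G.dist x y0 : ℕ) : ℝ) = 2 * gromov G x y0 r := by
      rw [e2, Nat.cast_sub t2n]
      push_cast
      ring
    have hj1n : 2 * j1 ≤ G.dist x r + G.dist r y0 - G.dist x y0 ∧
        G.dist x r + G.dist r y0 - G.dist x y0 ≤ 2 * j1 + 1 := by omega
    have hj1le : (j1 : ℝ) ≤ gromov G x y0 r := by
      have c1 : ((2 * j1 : ℕ) : ℝ) ≤ ((G.dist x r + G.dist r y0 - G.dist x y0 : ℕ) : ℝ) := by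
        exact_mod_cast hj1n.1
      rw [hn1c] at c1
      push_cast at c1
      linarith
    have hj1ge : gromov G x y0 r - 1 / 2 ≤ (j1 : ℝ) := by
      have c1 : ((G.dist x r + G.dist r y0 - G.dist x y0 : ℕ) : ℝ) ≤ ((2 * j1 + 1 : ℕ) : ℝ) := by
        exact_mod_cast hj1n.2
      rw [hn1c] at c1
      push_cast at c1
      linarith
    have hj1i : j1 ≤ i := by
      have c1 : (j1 : ℝ) < (i : ℝ) := lt_of_le_of_lt hj1le hc1
      exact_mod_cast c1.le
    have hth := (hthin r x y0 σ T0 W1 hσ hT0 hW1' j1 (le_trans hj1i hil)).1 hj1le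
    have hseg := aux_dist_getVert hG σ j1 (i - j1)
    rw [Nat.add_sub_cancel' hj1i] at hseg
    refine ⟨q, hqP, T0.getVert j1, hT0sup j1, ?_⟩
    have A1 : G.dist u (T0.getVert j1) ≤
        G.dist u (σ.getVert i) + (i - j1) + G.dist (σ.getVert j1) (T0.getVert j1) := by
      have B1 := hG.dist_triangle (u := u) (v := σ.getVert j1) (w := T0.getVert j1)
      have B2 := hG.dist_triangle (u := u) (v := σ.getVert i) (w := σ.getVert j1)
      have B3 : G.dist (σ.getVert i) (σ.getVert j1) ≤ i - j1 := by
        rw [SimpleGraph.dist_comm]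
        exact hseg
      omega
    have A1' : (G.dist u (T0.getVert j1) : ℝ) ≤
        (G.dist u (σ.getVert i) : ℝ) + ((i - j1 : ℕ) : ℝ) +
          (G.dist (σ.getVert j1) (T0.getVert j1) : ℝ) := by
      exact_mod_cast A1
    have hsub : ((i - j1 : ℕ) : ℝ) = (i : ℝ) - (j1 : ℝ) := by
      exact Nat.cast_sub hj1i
    linarith
  · -- upper half : jump up to j2 = ⌈(x|y)_r⌉ and use the pair of x
    have t1n : G.dist x y ≤ G.dist x r + G.dist r y := hG.dist_triangle
    have t3n : G.dist r y ≤ G.dist r x + G.dist x y := hG.dist_triangle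
    have hcn : G.dist x r = G.dist r x := SimpleGraph.dist_comm
    set j2 : ℕ := (G.dist x r + G.dist r y - G.dist x y + 1) / 2 with hj2def
    have hn2c : ((G.dist x r + G.dist r y - G.dist x y : ℕ) : ℝ) = 2 * gromov G x y r := by
      rw [e1, Nat.cast_sub t1n]
      push_cast
      ring
    have hj2n : G.dist x r + G.dist r y - G.dist x y ≤ 2 * j2 ∧
        2 * j2 ≤ G.dist x r + G.dist r y - G.dist x y + 1 := by omega
    have hj2ge : gromov G x y r ≤ (j2 : ℝ) := by
      have c1 : ((G.dist x r + G.dist r y - G.dist x y : ℕ) : ℝ) ≤ ((2 * j2 : ℕ) : ℝ) := by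
        exact_mod_cast hj2n.1
      rw [hn2c] at c1
      push_cast at c1
      linarith
    have hj2le : (j2 : ℝ) ≤ gromov G x y r + 1 / 2 := by
      have c1 : ((2 * j2 : ℕ) : ℝ) ≤ ((G.dist x r + G.dist r y - G.dist x y + 1 : ℕ) : ℝ) := by
        exact_mod_cast hj2n.2
      rw [Nat.cast_add, hn2c] at c1
      push_cast at c1
      linarith
    have hj2len : j2 ≤ σ.length := by
      rw [hsigma]
      omega
    have hij2 : i ≤ j2 := by
      have c1 : (i : ℝ) < (j2 : ℝ) := lt_of_lt_of_le hc2 hj2ge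
      exact_mod_cast c1.le
    have hth := (hthin r x y σ W2 T hσ hW2' hT j2 hj2len).2 hj2ge
    have hseg := aux_dist_getVert hG σ i (j2 - i)
    rw [Nat.add_sub_cancel' hij2] at hseg
    refine ⟨p, hpP, T.getVert (σ.length - j2), hTsup _, ?_⟩
    have A1 : G.dist u (T.getVert (σ.length - j2)) ≤
        G.dist u (σ.getVert i) + (j2 - i) +
          G.dist (σ.getVert j2) (T.getVert (σ.length - j2)) := by
      have B1 := hG.dist_triangle (u := u) (v := σ.getVert j2)
        (w := T.getVert (σ.length - j2))
      have B2 := hG.dist_triangle (u := u) (v := σ.getVert i) (w := σ.getVert j2)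
      omega
    have A1' : (G.dist u (T.getVert (σ.length - j2)) : ℝ) ≤
        (G.dist u (σ.getVert i) : ℝ) + ((j2 - i : ℕ) : ℝ) +
          (G.dist (σ.getVert j2) (T.getVert (σ.length - j2)) : ℝ) := by
      exact_mod_cast A1
    have hsub : ((j2 - i : ℕ) : ℝ) = (j2 : ℝ) - (i : ℝ) := by
      exact Nat.cast_sub hij2
    linarith
end

section
/- Every connected δ-thin graph G satisfies the (2δ + ½)-shallow pairing property: for any even profile π of vertices of G there exist a pairing P of π and a vertex v of G such that (x|y)_v ≤ 2δ + ½ for every pair {x,y} ∈ P. -/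
open SimpleGraph

namespace Stmt5Aux

variable {V : Type*} {G : SimpleGraph V} {δ : ℝ}

lemma dist_getVert_le (hG : G.Connected) : ∀ {u v : V} (w : G.Walk u v) (i : ℕ),
    G.dist u (w.getVert i) ≤ i := by
  intro u v w
  induction w with
  | nil => intro i; simp [Walk.getVert_of_length_le, SimpleGraph.dist_self]
  | @cons a b c h p ih =>
    intro i
    cases i with
    | zero => simp
    | succ n =>
      calc G.dist a ((Walk.cons h p).getVert (n+1)) = G.dist a (p.getVert n) := rfl
        _ ≤ G.dist a b + G.dist b (p.getVert n) := hG.dist_triangle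
        _ ≤ 1 + n := by
            have h1 : G.dist a b ≤ 1 := by
              simpa using dist_le (Walk.cons h (Walk.nil))
            exact Nat.add_le_add h1 (ih n)
        _ = n + 1 := by omega

lemma getVert_dist_le : ∀ {u v : V} (w : G.Walk u v) (i : ℕ),
    G.dist (w.getVert i) v ≤ w.length - i := by
  intro u v w
  induction w with
  | nil => intro i; simp [Walk.getVert_of_length_le, SimpleGraph.dist_self]
  | @cons a b c h p ih =>
    intro i
    cases i with
    | zero =>
      simpa using dist_le (Walk.cons h p)
    | succ n =>
      calc G.dist ((Walk.cons h p).getVert (n+1)) c = G.dist (p.getVert n) c := rfl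
        _ ≤ p.length - n := ih n
        _ ≤ (Walk.cons h p).length - (n+1) := by
            simp only [Walk.length_cons]; omega

lemma geodesic_getVert (hG : G.Connected) {u v : V} (w : G.Walk u v)
    (hw : w.length = G.dist u v) {i : ℕ} (hi : i ≤ w.length) :
    G.dist u (w.getVert i) = i ∧ G.dist (w.getVert i) v = w.length - i := by
  have h1 := dist_getVert_le hG w i
  have h2 := getVert_dist_le w i
  have h3 : G.dist u v ≤ G.dist u (w.getVert i) + G.dist (w.getVert i) v := hG.dist_triangle
  omega

/-- Twice the Gromov product, as a natural number. -/
noncomputable def g2 (G : SimpleGraph V) (x y v : V) : ℕ := G.dist x v + G.dist v y - G.dist x y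

lemma dist_le_add (hG : G.Connected) (x y v : V) : G.dist x y ≤ G.dist x v + G.dist v y :=
  hG.dist_triangle

lemma g2_cast (hG : G.Connected) (x y v : V) :
    (g2 G x y v : ℝ) = (G.dist x v : ℝ) + G.dist v y - G.dist x y := by
  have h := dist_le_add hG x y v
  unfold g2
  push_cast [Nat.cast_sub h]
  ring

lemma gromov_eq_g2 (hG : G.Connected) (x y v : V) :
    gromov G x y v = (g2 G x y v : ℝ) / 2 := by
  rw [g2_cast hG]; rfl

lemma g2_comm (x y v : V) : g2 G x y v = g2 G y x v := by
  unfold g2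
  rw [SimpleGraph.dist_comm (u := x) (v := v), SimpleGraph.dist_comm (u := v) (v := y),
    SimpleGraph.dist_comm (u := x) (v := y)]
  omega

lemma g2_le_left (hG : G.Connected) (x y v : V) : g2 G x y v ≤ 2 * G.dist v x := by
  have h1 : G.dist v y ≤ G.dist v x + G.dist x y := hG.dist_triangle
  have h2 : G.dist x v = G.dist v x := SimpleGraph.dist_comm
  unfold g2; omega

lemma g2_le_right (hG : G.Connected) (x y v : V) : g2 G x y v ≤ 2 * G.dist v y := by
  rw [g2_comm]; exact g2_le_left hG y x v



lemma moveL1 (hG : G.Connected) (hthin : IsThin G δ) {v x0 : V} (z : V)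
    (γ : G.Walk v x0) (hγ : IsGeodesicWalk G γ) {s : ℕ} (hs : s ≤ G.dist v x0)
    (h1 : 2 * s ≤ g2 G x0 z v) :
    (G.dist (γ.getVert s) z : ℝ) ≤ δ + G.dist v z - s := by
  have hsl : s ≤ γ.length := by rw [hγ]; exact hs
  obtain ⟨γz, hγz⟩ := hG.exists_walk_length_eq_dist v z
  obtain ⟨γxz, hγxz⟩ := hG.exists_walk_length_eq_dist x0 z
  have hth := hthin v x0 z γ γz γxz hγ hγz hγxz s hsl
  have hgr : (s : ℝ) ≤ gromov G x0 z v := by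
    rw [gromov_eq_g2 hG]
    have : ((2 * s : ℕ) : ℝ) ≤ (g2 G x0 z v : ℝ) := Nat.cast_le.2 h1
    push_cast at this ⊢
    linarith
  have hd : (G.dist (γ.getVert s) (γz.getVert s) : ℝ) ≤ δ := hth.1 hgr
  have hsz : s ≤ γz.length := by
    rw [hγz]
    have := g2_le_right hG x0 z v
    omega
  have hzz : G.dist (γz.getVert s) z = γz.length - s := (geodesic_getVert hG γz hγz hsz).2
  have htri : G.dist (γ.getVert s) z ≤
      G.dist (γ.getVert s) (γz.getVert s) + G.dist (γz.getVert s) z := hG.dist_triangle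
  have hc : (G.dist (γ.getVert s) z : ℝ) ≤
      (G.dist (γ.getVert s) (γz.getVert s) : ℝ) + G.dist (γz.getVert s) z := by
    exact_mod_cast Nat.cast_le.2 htri
  have hzz' : (G.dist (γz.getVert s) z : ℝ) = (G.dist v z : ℝ) - s := by
    rw [hzz, hγz]
    have : s ≤ G.dist v z := by rw [← hγz]; exact hsz
    push_cast [Nat.cast_sub this]
    ring
  linarith

lemma moveL2 (hG : G.Connected) (hthin : IsThin G δ) {v x0 : V} (z : V)
    (γ : G.Walk v x0) (hγ : IsGeodesicWalk G γ) {s : ℕ} (hs : s ≤ G.dist v x0)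
    (h1 : g2 G x0 z v ≤ 2 * s) :
    (G.dist (γ.getVert s) z : ℝ) ≤ δ + G.dist v z + s - g2 G x0 z v := by
  have hsl : s ≤ γ.length := by rw [hγ]; exact hs
  obtain ⟨γz, hγz⟩ := hG.exists_walk_length_eq_dist v z
  obtain ⟨γxz, hγxz⟩ := hG.exists_walk_length_eq_dist x0 z
  have hth := hthin v x0 z γ γz γxz hγ hγz hγxz s hsl
  have hgr : gromov G x0 z v ≤ (s : ℝ) := by
    rw [gromov_eq_g2 hG]
    have : (g2 G x0 z v : ℝ) ≤ ((2 * s : ℕ) : ℝ) := Nat.cast_le.2 h1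
    push_cast at this ⊢
    linarith
  have hd : (G.dist (γ.getVert s) (γxz.getVert (γ.length - s)) : ℝ) ≤ δ := hth.2 hgr
  -- abbreviations
  have hA : G.dist x0 v = G.dist v x0 := SimpleGraph.dist_comm
  have htr1 : G.dist v x0 ≤ G.dist v z + G.dist z x0 := hG.dist_triangle
  have hzx : G.dist z x0 = G.dist x0 z := SimpleGraph.dist_comm
  have htr2 : G.dist x0 z ≤ G.dist x0 v + G.dist v z := hG.dist_triangle
  have hg2 : g2 G x0 z v = G.dist x0 v + G.dist v z - G.dist x0 z := rfl
  have hγlen : γ.length = G.dist v x0 := hγ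
  have hj : γ.length - s ≤ γxz.length := by
    rw [hγxz, hγlen]; omega
  have hq : G.dist (γxz.getVert (γ.length - s)) z = γxz.length - (γ.length - s) :=
    (geodesic_getVert hG γxz hγxz hj).2
  have htri : G.dist (γ.getVert s) z ≤
      G.dist (γ.getVert s) (γxz.getVert (γ.length - s)) +
        G.dist (γxz.getVert (γ.length - s)) z := hG.dist_triangle
  have hc : (G.dist (γ.getVert s) z : ℝ) ≤
      (G.dist (γ.getVert s) (γxz.getVert (γ.length - s)) : ℝ) +
        G.dist (γxz.getVert (γ.length - s)) z := by exact_mod_cast Nat.cast_le.2 htri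
  have hqval : (G.dist (γxz.getVert (γ.length - s)) z : ℝ)
      = (G.dist x0 z : ℝ) - (G.dist v x0 : ℝ) + s := by
    have e1 : γxz.length - (γ.length - s) = G.dist x0 z - (G.dist v x0 - s) := by
      rw [hγxz, hγlen]
    have e2 : G.dist x0 z - (G.dist v x0 - s) + (G.dist v x0 - s) = G.dist x0 z := by
      have : G.dist v x0 - s ≤ G.dist x0 z := by omega
      omega
    rw [hq, e1]
    have hns : s ≤ G.dist v x0 := hs
    have h3 : G.dist v x0 - s ≤ G.dist x0 z := by omega
    push_cast [Nat.cast_sub h3, Nat.cast_sub hns]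
    ring
  have hg2c : (g2 G x0 z v : ℝ) = (G.dist x0 v : ℝ) + G.dist v z - G.dist x0 z :=
    g2_cast hG x0 z v
  have hAc : (G.dist x0 v : ℝ) = (G.dist v x0 : ℝ) := by exact_mod_cast hA
  linarith

lemma fourPoint (hG : G.Connected) (hthin : IsThin G δ) (v x y z : V) :
    (min (g2 G x y v) (g2 G y z v) : ℝ) - 1 - 2 * δ ≤ (g2 G x z v : ℝ) := by
  set m := min (g2 G x y v) (g2 G y z v) with hm
  set i := m / 2 with hi
  have hixy : 2 * i ≤ g2 G x y v := by
    have := min_le_left (g2 G x y v) (g2 G y z v); omega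
  have hiyz : 2 * i ≤ g2 G y z v := by
    have := min_le_right (g2 G x y v) (g2 G y z v); omega
  have hivx : i ≤ G.dist v x := by have := g2_le_left hG x y v; omega
  have hivy : i ≤ G.dist v y := by have := g2_le_right hG x y v; omega
  have hivz : i ≤ G.dist v z := by have := g2_le_right hG y z v; omega
  obtain ⟨γx, hγx⟩ := hG.exists_walk_length_eq_dist v x
  obtain ⟨γy, hγy⟩ := hG.exists_walk_length_eq_dist v y
  obtain ⟨γz, hγz⟩ := hG.exists_walk_length_eq_dist v z
  obtain ⟨γxy, hγxy⟩ := hG.exists_walk_length_eq_dist x y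
  obtain ⟨γyz, hγyz⟩ := hG.exists_walk_length_eq_dist y z
  have hilx : i ≤ γx.length := by rw [hγx]; exact hivx
  have hily : i ≤ γy.length := by rw [hγy]; exact hivy
  have hilz : i ≤ γz.length := by rw [hγz]; exact hivz
  have hgr1 : (i : ℝ) ≤ gromov G x y v := by
    rw [gromov_eq_g2 hG]
    have : ((2 * i : ℕ) : ℝ) ≤ (g2 G x y v : ℝ) := Nat.cast_le.2 hixy
    push_cast at this ⊢; linarith
  have hgr2 : (i : ℝ) ≤ gromov G y z v := by
    rw [gromov_eq_g2 hG]
    have : ((2 * i : ℕ) : ℝ) ≤ (g2 G y z v : ℝ) := Nat.cast_le.2 hiyz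
    push_cast at this ⊢; linarith
  have hd1 : (G.dist (γx.getVert i) (γy.getVert i) : ℝ) ≤ δ :=
    (hthin v x y γx γy γxy hγx hγy hγxy i hilx).1 hgr1
  have hd2 : (G.dist (γy.getVert i) (γz.getVert i) : ℝ) ≤ δ :=
    (hthin v y z γy γz γyz hγy hγz hγyz i hily).1 hgr2
  have hpx : G.dist (γx.getVert i) x = γx.length - i := (geodesic_getVert hG γx hγx hilx).2
  have hpz : G.dist (γz.getVert i) z = γz.length - i := (geodesic_getVert hG γz hγz hilz).2
  have htri : G.dist x z ≤ G.dist x (γx.getVert i) + G.dist (γx.getVert i) (γy.getVert i)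
      + G.dist (γy.getVert i) (γz.getVert i) + G.dist (γz.getVert i) z := by
    calc G.dist x z ≤ G.dist x (γx.getVert i) + G.dist (γx.getVert i) z := hG.dist_triangle
      _ ≤ G.dist x (γx.getVert i) + (G.dist (γx.getVert i) (γy.getVert i) +
            G.dist (γy.getVert i) z) := by
          have := hG.dist_triangle (u := γx.getVert i) (v := γy.getVert i) (w := z)
          omega
      _ ≤ _ := by
          have := hG.dist_triangle (u := γy.getVert i) (v := γz.getVert i) (w := z)
          omega
  have hxp : G.dist x (γx.getVert i) = G.dist v x - i := by
    rw [SimpleGraph.dist_comm, hpx, hγx]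
  have hzp : G.dist (γz.getVert i) z = G.dist v z - i := by rw [hpz, hγz]
  -- cast to the reals
  have hxpr : (G.dist x (γx.getVert i) : ℝ) = (G.dist v x : ℝ) - i := by
    rw [hxp]; push_cast [Nat.cast_sub hivx]; ring
  have hzpr : (G.dist (γz.getVert i) z : ℝ) = (G.dist v z : ℝ) - i := by
    rw [hzp]; push_cast [Nat.cast_sub hivz]; ring
  have htrir : (G.dist x z : ℝ) ≤ (G.dist x (γx.getVert i) : ℝ)
      + G.dist (γx.getVert i) (γy.getVert i)
      + G.dist (γy.getVert i) (γz.getVert i) + G.dist (γz.getVert i) z := by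
    exact_mod_cast Nat.cast_le.2 htri
  have hg2c : (g2 G x z v : ℝ) = (G.dist x v : ℝ) + G.dist v z - G.dist x z := g2_cast hG x z v
  have hxv : (G.dist x v : ℝ) = (G.dist v x : ℝ) := by
    exact_mod_cast SimpleGraph.dist_comm (G := G) (u := x) (v := v)
  have him : (m : ℝ) ≤ 2 * (i : ℝ) + 1 := by
    have h2i : m ≤ 2 * i + 1 := by omega
    exact_mod_cast h2i
  have hmr : (m : ℝ) = min ((g2 G x y v : ℕ) : ℝ) ((g2 G y z v : ℕ) : ℝ) := by
    rw [hm]; push_cast; rfl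
  rw [← hmr]
  linarith

lemma exists_pairing : ∀ (l : List V), Even l.length → ∃ P : List (V × V), IsPairing l P
  | [], _ => ⟨[], by simp [IsPairing]⟩
  | [x], h => by simp at h
  | x :: y :: t, h => by
      have ht : Even t.length := by
        rcases h with ⟨n, hn⟩
        simp only [List.length_cons] at hn
        exact ⟨n - 1, by omega⟩
      obtain ⟨P, hP⟩ := exists_pairing t ht
      refine ⟨(x, y) :: P, ?_⟩
      unfold IsPairing at hP ⊢
      simp only [List.map_cons, ← Multiset.cons_coe, Multiset.cons_add, Multiset.add_cons]
      rw [hP]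
      simp only [← Multiset.singleton_add]
      abel

lemma isPairing_perm {π : List V} {P Q : List (V × V)} (h : IsPairing π P)
    (hpq : P.Perm Q) : IsPairing π Q := by
  unfold IsPairing at h ⊢
  rw [h]
  congr 1
  · exact Multiset.coe_eq_coe.2 (hpq.map Prod.fst)
  · exact Multiset.coe_eq_coe.2 (hpq.map Prod.snd)

lemma pairing_swap1 {π : List V} {a b c d : V} {R : List (V × V)}
    (h : IsPairing π ((a, b) :: (c, d) :: R)) : IsPairing π ((a, c) :: (b, d) :: R) := by
  unfold IsPairing at h ⊢
  rw [h]
  simp only [List.map_cons, ← Multiset.cons_coe, Multiset.cons_add, Multiset.add_cons,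
    ← Multiset.singleton_add]
  abel

lemma pairing_swap2 {π : List V} {a b c d : V} {R : List (V × V)}
    (h : IsPairing π ((a, b) :: (c, d) :: R)) : IsPairing π ((a, d) :: (b, c) :: R) := by
  unfold IsPairing at h ⊢
  rw [h]
  simp only [List.map_cons, ← Multiset.cons_coe, Multiset.cons_add, Multiset.add_cons,
    ← Multiset.singleton_add]
  abel

noncomputable def maxG (G : SimpleGraph V) (v : V) (P : List (V × V)) : ℕ :=
  (P.map fun p => g2 G p.1 p.2 v).foldr max 0

lemma le_maxG {v : V} {P : List (V × V)} {p : V × V} (hp : p ∈ P) :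
    g2 G p.1 p.2 v ≤ maxG G v P := by
  induction P with
  | nil => simp at hp
  | cons q Q ih =>
    rcases List.mem_cons.1 hp with h | h
    · subst h; simp [maxG, List.foldr]
    · have := ih h
      simp only [maxG, List.map_cons, List.foldr_cons] at this ⊢
      omega

lemma maxG_le {v : V} {P : List (V × V)} {m : ℕ} (h : ∀ p ∈ P, g2 G p.1 p.2 v ≤ m) :
    maxG G v P ≤ m := by
  induction P with
  | nil => simp [maxG]
  | cons q Q ih =>
    have h1 := h q List.mem_cons_self
    have h2 := ih fun p hp => h p (List.mem_cons_of_mem _ hp)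
    simp only [maxG, List.map_cons, List.foldr_cons] at h2 ⊢
    omega

lemma maxG_mem {v : V} {P : List (V × V)} (h : maxG G v P ≠ 0) :
    ∃ p ∈ P, g2 G p.1 p.2 v = maxG G v P := by
  induction P with
  | nil => simp [maxG] at h
  | cons q Q ih =>
    by_cases hq : maxG G v Q = maxG G v (q :: Q)
    · have hne : maxG G v Q ≠ 0 := by rw [hq]; exact h
      obtain ⟨p, hp, hpe⟩ := ih hne
      exact ⟨p, List.mem_cons_of_mem _ hp, hpe.trans hq⟩
    · refine ⟨q, List.mem_cons_self, ?_⟩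
      have : maxG G v (q :: Q) = max (g2 G q.1 q.2 v) (maxG G v Q) := rfl
      omega


end Stmt5Aux

/-- Every connected `δ`-thin graph satisfies the `(2δ + ½)`-shallow pairing property:
for any even profile `π` there are a pairing `P` of `π` and a vertex `v` with
`(x|y)_v ≤ 2δ + ½` for every pair `{x,y} ∈ P`. -/
theorem stmt_5 {V : Type*} (G : SimpleGraph V) (hG : G.Connected)
    (δ : ℝ) (hδ : 0 ≤ δ) (hthin : IsThin G δ)
    (π : List V) (hπ : Even π.length) :
    ∃ (P : List (V × V)) (v : V), IsPairing π P ∧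
      ∀ p ∈ P, gromov G p.1 p.2 v ≤ 2 * δ + 1 / 2 := by
  classical
  obtain ⟨P₀, hP₀⟩ := Stmt5Aux.exists_pairing π hπ
  obtain ⟨v₀⟩ := hG.nonempty
  set S1 : Set ℕ := {m | ∃ (v : V) (P : List (V × V)), IsPairing π P ∧ Stmt5Aux.maxG G v P = m}
    with hS1def
  have hS1 : S1.Nonempty := ⟨Stmt5Aux.maxG G v₀ P₀, v₀, P₀, hP₀, rfl⟩
  set M := sInf S1 with hMdef
  have hM1 : M ∈ S1 := Nat.sInf_mem hS1
  set pred : V → (V × V) → Bool := fun v p => decide (Stmt5Aux.g2 G p.1 p.2 v = M) with hpreddef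
  set S2 : Set ℕ := {c | ∃ (v : V) (P : List (V × V)),
      IsPairing π P ∧ Stmt5Aux.maxG G v P = M ∧ P.countP (pred v) = c} with hS2def
  have hS2 : S2.Nonempty := by
    obtain ⟨v, P, h1, h2⟩ := hM1
    exact ⟨P.countP (pred v), v, P, h1, h2, rfl⟩
  set C := sInf S2 with hCdef
  obtain ⟨v, P, hpair, hmax, hcount⟩ := Nat.sInf_mem hS2
  refine ⟨P, v, hpair, ?_⟩
  suffices hM : (M : ℝ) ≤ 4 * δ + 1 by
    intro p hp
    rw [Stmt5Aux.gromov_eq_g2 hG]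
    have h1 : Stmt5Aux.g2 G p.1 p.2 v ≤ M := by
      rw [← hmax]; exact Stmt5Aux.le_maxG hp
    have h2 : (Stmt5Aux.g2 G p.1 p.2 v : ℝ) ≤ (M : ℝ) := Nat.cast_le.2 h1
    linarith
  by_contra hMb
  push_neg at hMb
  have hM2 : 2 ≤ M := by
    have h1 : (1 : ℝ) < (M : ℝ) := by linarith
    have h2 : 1 < M := by exact_mod_cast h1
    omega
  obtain ⟨pab, hpabP, hpabM⟩ := Stmt5Aux.maxG_mem (G := G) (v := v) (P := P)
    (by rw [hmax]; omega)
  obtain ⟨a, b⟩ := pab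
  have hgab : Stmt5Aux.g2 G a b v = M := by rw [hpabM, hmax]
  obtain ⟨R, hPR⟩ : ∃ R : List (V × V), P.Perm ((a, b) :: R) :=
    ⟨_, List.perm_cons_erase hpabP⟩
  set s := M / 2 with hsdef
  have hs1 : 1 ≤ s := by omega
  have h2s : 2 * s ≤ M := by omega
  have h2s1 : M ≤ 2 * s + 1 := by omega
  have hsr : (M : ℝ) ≤ 2 * (s : ℝ) + 1 := by exact_mod_cast h2s1
  have h2sr : 2 * (s : ℝ) ≤ (M : ℝ) := by exact_mod_cast h2s
  have hsδ : 2 * δ < (s : ℝ) := by linarith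
  have hsR : (0:ℝ) < s := by linarith
  have hsa : s ≤ G.dist v a := by
    have := Stmt5Aux.g2_le_left hG a b v; omega
  have hsb : s ≤ G.dist v b := by
    have := Stmt5Aux.g2_le_right hG a b v; omega
  obtain ⟨γa, hγa⟩ := hG.exists_walk_length_eq_dist v a
  obtain ⟨γb, hγb⟩ := hG.exists_walk_length_eq_dist v b
  set w := γa.getVert s with hwdef
  have hsla : s ≤ γa.length := by rw [hγa]; exact hsa
  have hmemP : ∀ q ∈ R, q ∈ P := fun q hq => hPR.mem_iff.2 (List.mem_cons_of_mem _ hq)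
  have hoM : ∀ c d : V, (c, d) ∈ R → Stmt5Aux.g2 G c d v ≤ M := fun c d hq => by
    rw [← hmax]; exact Stmt5Aux.le_maxG (hmemP _ hq)
  have hcntP : P.countP (pred v) = R.countP (pred v) + 1 := by
    rw [hPR.countP_eq]
    simp [List.countP_cons, hpreddef, hgab]
  have hCeq : P.countP (pred v) = C := hcount
  -- the exchange property at the optimum
  have hE1 : ∀ c d : V, (c, d) ∈ R → M ≤ Stmt5Aux.g2 G a c v ∨ M ≤ Stmt5Aux.g2 G b d v := by
    intro c d hq
    by_contra hcon
    push_neg at hcon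
    obtain ⟨h1, h2⟩ := hcon
    obtain ⟨R₂, hqR⟩ : ∃ R₂ : List (V × V), R.Perm ((c, d) :: R₂) :=
      ⟨_, List.perm_cons_erase hq⟩
    have hmemR : ∀ p ∈ R₂, p ∈ R := fun p hp => hqR.mem_iff.2 (List.mem_cons_of_mem _ hp)
    have hPq : P.Perm ((a, b) :: (c, d) :: R₂) := hPR.trans (hqR.cons (a, b))
    have hpair' : IsPairing π ((a, c) :: (b, d) :: R₂) :=
      Stmt5Aux.pairing_swap1 (Stmt5Aux.isPairing_perm hpair hPq)
    have hub : Stmt5Aux.maxG G v ((a, c) :: (b, d) :: R₂) ≤ M := by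
      apply Stmt5Aux.maxG_le
      intro p hp
      rcases List.mem_cons.1 hp with rfl | hp
      · exact le_of_lt h1
      rcases List.mem_cons.1 hp with rfl | hp
      · exact le_of_lt h2
      · exact (by rw [← hmax]; exact Stmt5Aux.le_maxG (hmemP _ (hmemR _ hp)))
    have hlb : M ≤ Stmt5Aux.maxG G v ((a, c) :: (b, d) :: R₂) :=
      Nat.sInf_le ⟨v, _, hpair', rfl⟩
    have heq : Stmt5Aux.maxG G v ((a, c) :: (b, d) :: R₂) = M := le_antisymm hub hlb
    have hC1 : C ≤ ((a, c) :: (b, d) :: R₂).countP (pred v) :=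
      Nat.sInf_le ⟨v, _, hpair', heq, rfl⟩
    have hC2 : ((a, c) :: (b, d) :: R₂).countP (pred v) ≤ R.countP (pred v) := by
      have hsub : R₂.countP (pred v) ≤ R.countP (pred v) := by
        rw [hqR.countP_eq (pred v)]
        simp only [List.countP_cons]
        omega
      simp only [List.countP_cons]
      have e1 : pred v (a, c) = false := by simp [hpreddef]; omega
      have e2 : pred v (b, d) = false := by simp [hpreddef]; omega
      rw [e1, e2]
      simpa using hsub
    omega
  have hE2 : ∀ c d : V, (c, d) ∈ R → M ≤ Stmt5Aux.g2 G a d v ∨ M ≤ Stmt5Aux.g2 G b c v := by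
    intro c d hq
    by_contra hcon
    push_neg at hcon
    obtain ⟨h1, h2⟩ := hcon
    obtain ⟨R₂, hqR⟩ : ∃ R₂ : List (V × V), R.Perm ((c, d) :: R₂) :=
      ⟨_, List.perm_cons_erase hq⟩
    have hmemR : ∀ p ∈ R₂, p ∈ R := fun p hp => hqR.mem_iff.2 (List.mem_cons_of_mem _ hp)
    have hPq : P.Perm ((a, b) :: (c, d) :: R₂) := hPR.trans (hqR.cons (a, b))
    have hpair' : IsPairing π ((a, d) :: (b, c) :: R₂) :=
      Stmt5Aux.pairing_swap2 (Stmt5Aux.isPairing_perm hpair hPq)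
    have hub : Stmt5Aux.maxG G v ((a, d) :: (b, c) :: R₂) ≤ M := by
      apply Stmt5Aux.maxG_le
      intro p hp
      rcases List.mem_cons.1 hp with rfl | hp
      · exact le_of_lt h1
      rcases List.mem_cons.1 hp with rfl | hp
      · exact le_of_lt h2
      · exact (by rw [← hmax]; exact Stmt5Aux.le_maxG (hmemP _ (hmemR _ hp)))
    have hlb : M ≤ Stmt5Aux.maxG G v ((a, d) :: (b, c) :: R₂) :=
      Nat.sInf_le ⟨v, _, hpair', rfl⟩
    have heq : Stmt5Aux.maxG G v ((a, d) :: (b, c) :: R₂) = M := le_antisymm hub hlb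
    have hC1 : C ≤ ((a, d) :: (b, c) :: R₂).countP (pred v) :=
      Nat.sInf_le ⟨v, _, hpair', heq, rfl⟩
    have hC2 : ((a, d) :: (b, c) :: R₂).countP (pred v) ≤ R.countP (pred v) := by
      have hsub : R₂.countP (pred v) ≤ R.countP (pred v) := by
        rw [hqR.countP_eq (pred v)]
        simp only [List.countP_cons]
        omega
      simp only [List.countP_cons]
      have e1 : pred v (a, d) = false := by simp [hpreddef]; omega
      have e2 : pred v (b, c) = false := by simp [hpreddef]; omega
      rw [e1, e2]
      simpa using hsub
    omega
  -- moving the basepoint towards `a` decreases the top pair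
  have hwa : (G.dist w a : ℝ) = (G.dist v a : ℝ) - s := by
    have h := (Stmt5Aux.geodesic_getVert hG γa hγa hsla).2
    rw [hγa] at h
    rw [h]
    push_cast [Nat.cast_sub hsa]
    ring
  have hwb : (G.dist w b : ℝ) ≤ δ + G.dist v b - s :=
    Stmt5Aux.moveL1 hG hthin b γa hγa hsa (by omega)
  have key1 : Stmt5Aux.g2 G a b w < M := by
    have hcast : (Stmt5Aux.g2 G a b w : ℝ) = (G.dist a w : ℝ) + G.dist w b - G.dist a b :=
      Stmt5Aux.g2_cast hG a b w
    have hcom : (G.dist a w : ℝ) = (G.dist w a : ℝ) := by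
      exact_mod_cast SimpleGraph.dist_comm (G := G) (u := a) (v := w)
    have hMr : (Stmt5Aux.g2 G a b v : ℝ) = (M : ℝ) := by exact_mod_cast hgab
    have hvcast : (Stmt5Aux.g2 G a b v : ℝ) = (G.dist a v : ℝ) + G.dist v b - G.dist a b :=
      Stmt5Aux.g2_cast hG a b v
    have hav : (G.dist a v : ℝ) = (G.dist v a : ℝ) := by
      exact_mod_cast SimpleGraph.dist_comm (G := G) (u := a) (v := v)
    have hfin : (Stmt5Aux.g2 G a b w : ℝ) < (M : ℝ) := by linarith
    exact_mod_cast hfin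
  -- every other pair also stays strictly below the maximum
  have key2 : ∀ c d : V, (c, d) ∈ R → Stmt5Aux.g2 G c d w < M := by
    intro c d hq
    have ho : Stmt5Aux.g2 G c d v ≤ M := hoM c d hq
    have hor : (Stmt5Aux.g2 G c d v : ℝ) ≤ (M : ℝ) := Nat.cast_le.2 ho
    have hcdw : (Stmt5Aux.g2 G c d w : ℝ) = (G.dist c w : ℝ) + G.dist w d - G.dist c d :=
      Stmt5Aux.g2_cast hG c d w
    have hcdv : (Stmt5Aux.g2 G c d v : ℝ) = (G.dist c v : ℝ) + G.dist v d - G.dist c d :=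
      Stmt5Aux.g2_cast hG c d v
    have hcwc : (G.dist c w : ℝ) = (G.dist w c : ℝ) := by
      exact_mod_cast SimpleGraph.dist_comm (G := G) (u := c) (v := w)
    have hcvc : (G.dist c v : ℝ) = (G.dist v c : ℝ) := by
      exact_mod_cast SimpleGraph.dist_comm (G := G) (u := c) (v := v)
    suffices hr : (Stmt5Aux.g2 G c d w : ℝ) < (M : ℝ) by exact_mod_cast hr
    rcases hE1 c d hq with hac | hbd <;> rcases hE2 c d hq with had | hbc
    · -- both c and d aligned with a
      have bc := Stmt5Aux.moveL1 hG hthin c γa hγa hsa (by omega)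
      have bd := Stmt5Aux.moveL1 hG hthin d γa hγa hsa (by omega)
      linarith
    · -- c aligned with a and with b
      have bc := Stmt5Aux.moveL1 hG hthin c γa hγa hsa (by omega)
      have h4 := Stmt5Aux.fourPoint hG hthin v a c d
      have hminr : (Stmt5Aux.g2 G c d v : ℝ)
          ≤ min ((Stmt5Aux.g2 G a c v : ℕ) : ℝ) ((Stmt5Aux.g2 G c d v : ℕ) : ℝ) := by
        refine le_min ?_ le_rfl
        have : Stmt5Aux.g2 G c d v ≤ Stmt5Aux.g2 G a c v := le_trans ho hac
        exact_mod_cast this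
      rcases le_or_gt (2 * s) (Stmt5Aux.g2 G a d v) with hL | hL
      · have bd := Stmt5Aux.moveL1 hG hthin d γa hγa hsa hL
        linarith
      · have bd := Stmt5Aux.moveL2 hG hthin d γa hγa hsa (le_of_lt hL)
        linarith
    · -- d aligned with a and with b
      have bd := Stmt5Aux.moveL1 hG hthin d γa hγa hsa (by omega)
      have h4 := Stmt5Aux.fourPoint hG hthin v a d c
      have hdc : Stmt5Aux.g2 G d c v = Stmt5Aux.g2 G c d v := Stmt5Aux.g2_comm d c v
      have hminr : (Stmt5Aux.g2 G c d v : ℝ)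
          ≤ min ((Stmt5Aux.g2 G a d v : ℕ) : ℝ) ((Stmt5Aux.g2 G d c v : ℕ) : ℝ) := by
        refine le_min ?_ ?_
        · have : Stmt5Aux.g2 G c d v ≤ Stmt5Aux.g2 G a d v := le_trans ho had
          exact_mod_cast this
        · have : Stmt5Aux.g2 G c d v ≤ Stmt5Aux.g2 G d c v := by rw [hdc]
          exact_mod_cast this
      have hdcw : (Stmt5Aux.g2 G d c w : ℝ) = (Stmt5Aux.g2 G c d w : ℝ) := by
        exact_mod_cast Stmt5Aux.g2_comm (G := G) d c w
      have hdwd : (G.dist d w : ℝ) = (G.dist w d : ℝ) := by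
        exact_mod_cast SimpleGraph.dist_comm (G := G) (u := d) (v := w)
      have hdvd : (G.dist d v : ℝ) = (G.dist v d : ℝ) := by
        exact_mod_cast SimpleGraph.dist_comm (G := G) (u := d) (v := v)
      rcases le_or_gt (2 * s) (Stmt5Aux.g2 G a c v) with hL | hL
      · have bc := Stmt5Aux.moveL1 hG hthin c γa hγa hsa hL
        linarith
      · have bc := Stmt5Aux.moveL2 hG hthin c γa hγa hsa (le_of_lt hL)
        linarith
    · -- both c and d aligned with b
      obtain ⟨γab, hγab⟩ := hG.exists_walk_length_eq_dist a b
      have hgr : (s : ℝ) ≤ gromov G a b v := by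
        rw [Stmt5Aux.gromov_eq_g2 hG]
        have : (Stmt5Aux.g2 G a b v : ℝ) = (M : ℝ) := by exact_mod_cast hgab
        linarith
      have hwwb : (G.dist w (γb.getVert s) : ℝ) ≤ δ :=
        (hthin v a b γa γb γab hγa hγb hγab s hsla).1 hgr
      have bcb := Stmt5Aux.moveL1 hG hthin c γb hγb hsb (by omega)
      have bdb := Stmt5Aux.moveL1 hG hthin d γb hγb hsb (by omega)
      have t1 : (G.dist w c : ℝ)
          ≤ (G.dist w (γb.getVert s) : ℝ) + G.dist (γb.getVert s) c := by
        exact_mod_cast Nat.cast_le.2 (hG.dist_triangle (u := w) (v := γb.getVert s) (w := c))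
      have t2 : (G.dist w d : ℝ)
          ≤ (G.dist w (γb.getVert s) : ℝ) + G.dist (γb.getVert s) d := by
        exact_mod_cast Nat.cast_le.2 (hG.dist_triangle (u := w) (v := γb.getVert s) (w := d))
      linarith
  -- contradiction with the minimality of M
  have hub : Stmt5Aux.maxG G w P ≤ M - 1 := by
    apply Stmt5Aux.maxG_le
    intro p hp
    have hp' := hPR.mem_iff.1 hp
    rcases List.mem_cons.1 hp' with rfl | hpR
    · have hk : Stmt5Aux.g2 G (a, b).1 (a, b).2 w < M := key1
      omega
    · have hk : Stmt5Aux.g2 G p.1 p.2 w < M := key2 p.1 p.2 (by rwa [Prod.mk.eta])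
      omega
  have hlow : M ≤ Stmt5Aux.maxG G w P := Nat.sInf_le ⟨w, P, hpair, rfl⟩
  omega
end

section
/- Every tree satisfies the pairing property: for any even profile π of vertices of a tree T, there exist a pairing P of π and a vertex v of T such that D_π(P) = F_π(v). -/
open SimpleGraph

namespace TreePairing

variable {V : Type*} {T : SimpleGraph V}

/-- In a tree, every path between two vertices has length equal to the distance. -/
lemma path_length_eq_dist (hT : T.IsTree) {u v : V} (p : T.Walk u v) (hp : p.IsPath) :
    p.length = T.dist u v := by
  obtain ⟨q, hq, hql⟩ := hT.isConnected.exists_path_of_dist u v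
  rw [(hT.existsUnique_path u v).unique hp hq, hql]

/-- Unique neighbor of `v` in the direction of `z ≠ v`. -/
lemma dir_existsUnique (hT : T.IsTree) {v z : V} (h : z ≠ v) :
    ∃! N : V, T.Adj v N ∧ T.dist N z + 1 = T.dist v z := by
  classical
  have hd0 : T.dist v z ≠ 0 := by
    rw [SimpleGraph.dist_ne_zero_iff_ne_and_reachable]
    exact ⟨Ne.symm h, hT.isConnected v z⟩
  obtain ⟨p, hp, hpl⟩ := hT.isConnected.exists_path_of_dist v z
  -- existence
  have hex : ∃ N : V, T.Adj v N ∧ T.dist N z + 1 = T.dist v z := by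
    cases p with
    | nil => exact absurd rfl (Ne.symm h)
    | cons hadj q =>
      refine ⟨_, hadj, ?_⟩
      have hq : q.IsPath := hp.of_cons
      have := path_length_eq_dist hT q hq
      rw [Walk.length_cons, this] at hpl
      omega
  obtain ⟨N, hN⟩ := hex
  refine ⟨N, hN, ?_⟩
  -- uniqueness: any N' with the property equals N
  have key : ∀ (N' : V) (hadj : T.Adj v N'), T.dist N' z + 1 = T.dist v z →
      ∃ (q : T.Walk N' z), q.IsPath ∧ (Walk.cons hadj q : T.Walk v z).IsPath := by
    intro N' hadj hdist
    obtain ⟨q, hq, hql⟩ := hT.isConnected.exists_path_of_dist N' z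
    refine ⟨q, hq, ?_⟩
    rw [Walk.cons_isPath_iff]
    refine ⟨hq, fun hvmem => ?_⟩
    -- if v ∈ q.support, then the path N' → z decomposes through v, too long
    have h1 := path_length_eq_dist hT (q.takeUntil v hvmem) (hq.takeUntil hvmem)
    have h2 := path_length_eq_dist hT (q.dropUntil v hvmem) (hq.dropUntil hvmem)
    have h3 : (q.takeUntil v hvmem).length + (q.dropUntil v hvmem).length = q.length := by
      rw [← Walk.length_append, Walk.take_spec]
    have hNv : T.dist N' v = 1 := by
      rw [SimpleGraph.dist_comm]
      exact SimpleGraph.dist_eq_one_iff_adj.mpr hadj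
    rw [h1, h2, hNv, hql] at h3
    omega
  intro N' hN'
  obtain ⟨q, hq, hcons⟩ := key N' hN'.1 hN'.2
  obtain ⟨q0, hq0, hcons0⟩ := key N hN.1 hN.2
  have := (hT.existsUnique_path v z).unique hcons hcons0
  have hgv := congrArg (fun w => Walk.getVert w 1) this
  simpa [Walk.getVert_cons_succ, Walk.getVert_zero] using hgv

open scoped Classical in
/-- The color of `z` as seen from `v`: `none` if `z = v`, else the neighbor of `v`
towards `z`. -/
noncomputable def col (hT : T.IsTree) (v z : V) : Option V :=
  if h : z = v then none else some (dir_existsUnique hT h).exists.choose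

lemma col_eq_none_iff (hT : T.IsTree) {v z : V} : col hT v z = none ↔ z = v := by
  classical
  unfold col; split <;> simp_all

lemma col_spec (hT : T.IsTree) {v z N : V} (h : col hT v z = some N) :
    T.Adj v N ∧ T.dist N z + 1 = T.dist v z := by
  unfold col at h
  split at h
  · simp at h
  · next hne =>
    obtain ⟨rfl⟩ : (dir_existsUnique hT hne).exists.choose = N := by simpa using h
    exact (dir_existsUnique hT hne).exists.choose_spec

lemma col_eq_some (hT : T.IsTree) {v z N : V} (hne : z ≠ v) (hadj : T.Adj v N)
    (hdist : T.dist N z + 1 = T.dist v z) : col hT v z = some N := by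
  classical
  unfold col
  rw [dif_neg hne]
  have h1 := (dir_existsUnique hT hne).exists.choose_spec
  have := (dir_existsUnique hT hne).unique h1 ⟨hadj, hdist⟩
  rw [this]

/-- For adjacent `v, N`, distances from any `z` differ by exactly one. -/
lemma dist_adj_cases (hT : T.IsTree) {v N : V} (hA : T.Adj v N) (z : V) :
    T.dist z N = T.dist z v + 1 ∨ T.dist z v = T.dist z N + 1 := by
  classical
  obtain ⟨p, hp, hpl⟩ := hT.isConnected.exists_path_of_dist z v
  by_cases hmem : N ∈ p.support
  · right
    have h1 := path_length_eq_dist hT (p.takeUntil N hmem) (hp.takeUntil hmem)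
    have h2 := path_length_eq_dist hT (p.dropUntil N hmem) (hp.dropUntil hmem)
    have h3 : (p.takeUntil N hmem).length + (p.dropUntil N hmem).length = p.length := by
      rw [← Walk.length_append, Walk.take_spec]
    have hNv : T.dist N v = 1 := by
      rw [SimpleGraph.dist_comm]
      exact SimpleGraph.dist_eq_one_iff_adj.mpr hA
    rw [h1, h2, hNv, hpl] at h3
    omega
  · left
    have hcpath : (p.concat hA).IsPath := by
      rw [Walk.isPath_def, Walk.support_concat]
      simpa using List.Nodup.concat hmem hp.support_nodup
    have := path_length_eq_dist hT (p.concat hA) hcpath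
    rw [Walk.length_concat, hpl] at this
    omega

/-- If the color of `z` from `v` is not `some N` (with `N` adjacent to `v`), then
`N` is one step further from `z`. -/
lemma dist_of_col_ne (hT : T.IsTree) {v N z : V} (hA : T.Adj v N)
    (h : col hT v z ≠ some N) : T.dist N z = T.dist v z + 1 := by
  by_cases hzv : z = v
  · subst hzv
    have : T.dist N z = 1 := SimpleGraph.dist_eq_one_iff_adj.mpr hA.symm
    simp [this]
  · rcases dist_adj_cases hT hA z with hc | hc
    · rw [SimpleGraph.dist_comm (u := z) (v := N), SimpleGraph.dist_comm (u := z) (v := v)] at hc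
      omega
    · exfalso
      apply h
      apply col_eq_some hT hzv hA
      rw [SimpleGraph.dist_comm (u := z) (v := N), SimpleGraph.dist_comm (u := z) (v := v)] at hc
      omega

lemma dist_of_col_eq (hT : T.IsTree) {v N z : V} (h : col hT v z = some N) :
    T.dist N z + 1 = T.dist v z := (col_spec hT h).2

/-- Each vertex `w ≠ v` on the path from `v` to `a` has the same color from `v` as `a`. -/
lemma col_of_mem_support (hT : T.IsTree) {v a : V} (p : T.Walk v a) (hp : p.IsPath)
    {w : V} (hw : w ∈ p.support) (hwv : w ≠ v) : col hT v w = col hT v a := by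
  classical
  cases p with
  | nil => simp at hw; exact absurd hw hwv
  | cons hadj q =>
    next N =>
    have hq : q.IsPath := hp.of_cons
    have hvq : v ∉ q.support := ((Walk.cons_isPath_iff hadj q).mp hp).2
    have hav : a ≠ v := fun hav => hvq (hav ▸ q.end_mem_support)
    -- col v a = some N
    have hcola : col hT v a = some N := by
      apply col_eq_some hT hav hadj
      have h1 := path_length_eq_dist hT q hq
      have h2 := path_length_eq_dist hT (Walk.cons hadj q) hp
      rw [Walk.length_cons, h1] at h2
      omega
    rw [hcola]
    -- w ∈ q.support
    have hwq : w ∈ q.support := by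
      rw [Walk.support_cons] at hw
      rcases List.mem_cons.mp hw with h | h
      · exact absurd h hwv
      · exact h
    have hqt : (q.takeUntil w hwq).IsPath := hq.takeUntil hwq
    have hvt : v ∉ (q.takeUntil w hwq).support :=
      fun hmem => hvq (Walk.support_takeUntil_subset q hwq hmem)
    have hcpath : (Walk.cons hadj (q.takeUntil w hwq)).IsPath := hqt.cons hvt
    apply col_eq_some hT hwv hadj
    have h1 := path_length_eq_dist hT (q.takeUntil w hwq) hqt
    have h2 := path_length_eq_dist hT (Walk.cons hadj (q.takeUntil w hwq)) hcpath
    rw [Walk.length_cons, h1] at h2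
    omega

/-- If `a` and `b` have compatible colors from `v`, then `v` lies between them. -/
lemma dist_add_of_good (hT : T.IsTree) {v a b : V}
    (h : col hT v a = none ∨ col hT v b = none ∨ col hT v a ≠ col hT v b) :
    T.dist a b = T.dist a v + T.dist v b := by
  classical
  by_cases hav : a = v
  · subst hav; simp
  by_cases hbv : b = v
  · subst hbv; simp [SimpleGraph.dist_comm]
  have hcol : col hT v a ≠ col hT v b := by
    rcases h with h | h | h
    · exact absurd ((col_eq_none_iff hT).mp h) hav
    · exact absurd ((col_eq_none_iff hT).mp h) hbv
    · exact h
  obtain ⟨pa, hpa, hpal⟩ := hT.isConnected.exists_path_of_dist v a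
  obtain ⟨pb, hpb, hpbl⟩ := hT.isConnected.exists_path_of_dist v b
  have hdisj : ∀ w, w ∈ pa.support → w ∈ pb.support → w = v := by
    intro w hwa hwb
    by_contra hwv
    exact hcol ((col_of_mem_support hT pa hpa hwa hwv).symm.trans
      (col_of_mem_support hT pb hpb hwb hwv))
  have hW : (pa.reverse.append pb).IsPath := by
    rw [Walk.isPath_def, Walk.support_append, Walk.support_reverse]
    apply List.Nodup.append
    · exact List.nodup_reverse.mpr hpa.support_nodup
    · exact hpb.support_nodup.tail
    · intro w hwa hwb
      have hwa' : w ∈ pa.support := List.mem_reverse.mp hwa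
      have hwb' : w ∈ pb.support := by
        rw [Walk.support_eq_cons pb]; exact List.mem_cons_of_mem _ hwb
      have hwv : w = v := hdisj w hwa' hwb'
      rw [hwv] at hwb
      have hnd := hpb.support_nodup
      rw [Walk.support_eq_cons pb] at hnd
      exact (List.nodup_cons.mp hnd).1 hwb
  have hlen := path_length_eq_dist hT (pa.reverse.append pb) hW
  rw [Walk.length_append, Walk.length_reverse, hpal, hpbl] at hlen
  rw [← hlen, SimpleGraph.dist_comm (u := v) (v := a)]


lemma sum_map_add {α : Type*} (f g : α → ℕ) :
    ∀ l : List α, (l.map fun a => f a + g a).sum = (l.map f).sum + (l.map g).sum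
  | [] => rfl
  | a :: l => by simp [sum_map_add f g l]; omega

lemma sum_ite_eq_count {α β : Type*} [DecidableEq β] (f : α → β) (b : β) :
    ∀ l : List α, (l.map fun a => if f a = b then 1 else 0).sum
      = Multiset.count b ((l.map f : List β) : Multiset β)
  | [] => by simp
  | a :: l => by
    have hco : ((List.map f (a :: l) : List β) : Multiset β)
        = f a ::ₘ ((l.map f : List β) : Multiset β) := by
      simp
    rw [List.map_cons, List.sum_cons, hco, Multiset.count_cons, sum_ite_eq_count f b l]
    by_cases h : f a = b
    · rw [if_pos h, if_pos h.symm]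
      omega
    · rw [if_neg h, if_neg fun hh => h hh.symm]
      omega

lemma count_add_count_le {α : Type*} [DecidableEq α] (x y : α) (h : x ≠ y) (t : Multiset α) :
    t.count x + t.count y ≤ Multiset.card t := by
  induction t using Multiset.induction_on with
  | empty => simp
  | cons a s ih =>
    rw [Multiset.card_cons]
    by_cases hx : x = a
    · subst hx
      rw [Multiset.count_cons_self, Multiset.count_cons_of_ne (Ne.symm h)]
      omega
    · rw [Multiset.count_cons_of_ne hx]
      by_cases hy : y = a
      · subst hy
        rw [Multiset.count_cons_self]
        omega
      · rw [Multiset.count_cons_of_ne hy]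
        omega

lemma pairing_lemma {α : Type*} [DecidableEq α] (col : α → Option α) :
    ∀ (k : ℕ) (m : Multiset α), Multiset.card m = 2 * k →
      (∀ N : α, (m.map col).count (some N) ≤ k) →
      ∃ P : List (α × α),
        m = ((P.map Prod.fst : List α) : Multiset α) + ((P.map Prod.snd : List α) : Multiset α) ∧
        ∀ p ∈ P, col p.1 = none ∨ col p.2 = none ∨ col p.1 ≠ col p.2 := by
  intro k
  induction k with
  | zero =>
    intro m hm _
    refine ⟨[], ?_, by simp⟩
    simp only [Nat.mul_zero] at hm
    simp [Multiset.card_eq_zero.mp hm]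
  | succ k ih =>
    intro m hm hcnt
    have hpos : 0 < Multiset.card m := by omega
    by_cases hall : ∀ x ∈ m, col x = none
    · obtain ⟨a, ha⟩ := Multiset.card_pos_iff_exists_mem.mp hpos
      have hbpos : 0 < Multiset.card (m.erase a) := by
        rw [Multiset.card_erase_of_mem ha, hm, Nat.pred_eq_sub_one]; omega
      obtain ⟨b, hb⟩ := Multiset.card_pos_iff_exists_mem.mp hbpos
      set m'' := (m.erase a).erase b with hm''
      have hm2 : m = a ::ₘ b ::ₘ m'' := by
        rw [hm'', Multiset.cons_erase hb, Multiset.cons_erase ha]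
      have hcard : Multiset.card m'' = 2 * k := by
        have := congrArg Multiset.card hm2
        simp only [Multiset.card_cons] at this
        omega
      have hcnt'' : ∀ N : α, (m''.map col).count (some N) ≤ k := by
        intro N
        have hzero : some N ∉ m''.map col := by
          intro hmem
          obtain ⟨x, hx, hxc⟩ := Multiset.mem_map.mp hmem
          have hxme : x ∈ m := Multiset.mem_of_mem_erase (Multiset.mem_of_mem_erase hx)
          rw [hall x hxme] at hxc
          exact Option.some_ne_none N hxc.symm
        rw [Multiset.count_eq_zero.mpr hzero]
        omega
      obtain ⟨P, hP1, hP2⟩ := ih m'' hcard hcnt''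
      refine ⟨(a, b) :: P, ?_, ?_⟩
      · rw [hm2, hP1]
        simp only [List.map_cons, ← Multiset.cons_coe, Multiset.cons_add, Multiset.add_cons]
        exact Multiset.cons_swap _ _ _
      · intro p hp
        rcases List.mem_cons.mp hp with rfl | hp'
        · exact Or.inl (hall a ha)
        · exact hP2 p hp'
    · push_neg at hall
      obtain ⟨x0, hx0m, hx0⟩ := hall
      set S := m.map col with hS
      have hFne : (m.toFinset.filter fun x => col x ≠ none).Nonempty :=
        ⟨x0, Finset.mem_filter.mpr ⟨Multiset.mem_toFinset.mpr hx0m, hx0⟩⟩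
      obtain ⟨a, haF, hamax⟩ :=
        Finset.exists_max_image (m.toFinset.filter fun x => col x ≠ none)
          (fun x => S.count (col x)) hFne
      have ham : a ∈ m := Multiset.mem_toFinset.mp (Finset.mem_filter.mp haF).1
      have hane : col a ≠ none := (Finset.mem_filter.mp haF).2
      obtain ⟨Na, hNa⟩ := Option.ne_none_iff_exists'.mp hane
      have hcola : S.count (col a) ≤ k + 1 := by
        rw [hNa]; exact hcnt Na
      have hcardS : Multiset.card S = 2 * (k + 1) := by
        rw [hS, Multiset.card_map]; exact hm
      have hbex : ∃ b ∈ m.erase a, col b ≠ col a := by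
        by_contra hc
        push_neg at hc
        have hallca : ∀ x ∈ m, col x = col a := by
          intro x hx
          rw [← Multiset.cons_erase ham] at hx
          rcases Multiset.mem_cons.mp hx with rfl | hx'
          · rfl
          · exact hc x hx'
        have hfull : S.count (col a) = Multiset.card S := by
          rw [Multiset.count_eq_card]
          intro y hy
          obtain ⟨x, hx, rfl⟩ := Multiset.mem_map.mp hy
          exact (hallca x hx).symm
        omega
      obtain ⟨b, hbm, hbne⟩ := hbex
      have hbmm : b ∈ m := Multiset.mem_of_mem_erase hbm
      set m'' := (m.erase a).erase b with hm''
      have hm2 : m = a ::ₘ b ::ₘ m'' := by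
        rw [hm'', Multiset.cons_erase hbm, Multiset.cons_erase ham]
      have hcard : Multiset.card m'' = 2 * k := by
        have := congrArg Multiset.card hm2
        simp only [Multiset.card_cons] at this
        omega
      have hmap2 : S = col a ::ₘ col b ::ₘ (m''.map col) := by
        rw [hS, hm2]
        simp [Multiset.map_cons]
      have hMle : (m''.map col) ≤ col b ::ₘ m''.map col := Multiset.le_cons_self _ _
      have hcnt'' : ∀ N : α, (m''.map col).count (some N) ≤ k := by
        intro N
        have hSN := hcnt N
        by_cases h1 : some N = col a
        · have e : S.count (some N) = (col b ::ₘ m''.map col).count (some N) + 1 := by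
            rw [hmap2, ← h1, Multiset.count_cons_self]
          have e2 : (m''.map col).count (some N) ≤ (col b ::ₘ m''.map col).count (some N) :=
            Multiset.count_le_of_le _ hMle
          omega
        · have e : S.count (some N) = (col b ::ₘ m''.map col).count (some N) := by
            rw [hmap2, Multiset.count_cons_of_ne h1]
          by_cases h2 : some N = col b
          · have e2 : (col b ::ₘ m''.map col).count (some N)
                = (m''.map col).count (some N) + 1 := by
              rw [← h2, Multiset.count_cons_self]
            omega
          · have e2 : (col b ::ₘ m''.map col).count (some N)
                = (m''.map col).count (some N) := Multiset.count_cons_of_ne h2 _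
            by_contra hk'
            push_neg at hk'
            -- some N is realized in m, so its count is dominated by that of col a
            have hSNk : k + 1 ≤ S.count (some N) := by omega
            have hmemN : some N ∈ S := Multiset.count_pos.mp (by omega)
            obtain ⟨x, hxm, hxc⟩ := Multiset.mem_map.mp hmemN
            have hxF : x ∈ m.toFinset.filter fun x => col x ≠ none := by
              refine Finset.mem_filter.mpr ⟨Multiset.mem_toFinset.mpr hxm, ?_⟩
              rw [hxc]; exact Option.some_ne_none N
            have hmax := hamax x hxF
            rw [hxc] at hmax
            -- counting in S minus one copy of col b
            have hbS : col b ∈ S := by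
              rw [hmap2]
              exact Multiset.mem_cons.mpr (Or.inr (Multiset.mem_cons_self _ _))
            have hcne : col a ≠ some N := fun h => h1 h.symm
            have hle2 := count_add_count_le (col a) (some N) hcne (S.erase (col b))
            rw [Multiset.count_erase_of_ne
                  (show (col a : Option α) ≠ col b from fun h => hbne h.symm),
                Multiset.count_erase_of_ne (show (some N : Option α) ≠ col b from h2),
                Multiset.card_erase_of_mem hbS, hcardS, Nat.pred_eq_sub_one] at hle2
            omega
      obtain ⟨P, hP1, hP2⟩ := ih m'' hcard hcnt''
      refine ⟨(a, b) :: P, ?_, ?_⟩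
      · rw [hm2, hP1]
        simp only [List.map_cons, ← Multiset.cons_coe, Multiset.cons_add, Multiset.add_cons]
        exact Multiset.cons_swap _ _ _
      · intro p hp
        rcases List.mem_cons.mp hp with rfl | hp'
        · exact Or.inr (Or.inr fun h => hbne h.symm)
        · exact hP2 p hp'

lemma sum_ones {α : Type*} : ∀ l : List α, (l.map fun _ => (1 : ℕ)).sum = l.length
  | [] => rfl
  | a :: l => by simp [sum_ones l]; omega

lemma exists_median [DecidableEq V] (hT : T.IsTree) (π : List V) (v0 : V) :
    ∃ v : V, ∀ N : V,
      2 * Multiset.count (some N) ((π.map (col hT v) : List (Option V)) : Multiset (Option V))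
        ≤ π.length := by
  suffices h : ∀ (n : ℕ) (v : V), Fsum T π v ≤ n →
      ∃ v' : V, ∀ N : V,
        2 * Multiset.count (some N) ((π.map (col hT v') : List (Option V)) : Multiset (Option V))
          ≤ π.length by
    exact h (Fsum T π v0) v0 le_rfl
  intro n
  induction n using Nat.strong_induction_on with
  | _ n ih =>
    intro v hv
    by_cases hgood : ∀ N : V,
        2 * Multiset.count (some N) ((π.map (col hT v) : List (Option V)) : Multiset (Option V))
          ≤ π.length
    · exact ⟨v, hgood⟩
    push_neg at hgood
    obtain ⟨N, hN⟩ := hgood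
    have hcnt1 : 0 < Multiset.count (some N)
        ((π.map (col hT v) : List (Option V)) : Multiset (Option V)) := by omega
    have hmem : some N ∈ π.map (col hT v) := by
      have := Multiset.count_pos.mp hcnt1
      simpa using this
    obtain ⟨z, hz, hcz⟩ := List.mem_map.mp hmem
    have hadj : T.Adj v N := (col_spec hT hcz).1
    have hpt : ∀ x ∈ π, T.dist N x + (if col hT v x = some N then 1 else 0)
        = T.dist v x + (if col hT v x = some N then 0 else 1) := by
      intro x _
      by_cases hc : col hT v x = some N
      · have := dist_of_col_eq hT hc
        rw [if_pos hc, if_pos hc]; omega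
      · have := dist_of_col_ne hT hadj hc
        rw [if_neg hc, if_neg hc]; omega
    have hsum : (π.map fun x => T.dist N x + (if col hT v x = some N then 1 else 0)).sum
        = (π.map fun x => T.dist v x + (if col hT v x = some N then 0 else 1)).sum := by
      rw [List.map_congr_left hpt]
    rw [sum_map_add, sum_map_add] at hsum
    have hc1 : (π.map fun x => if col hT v x = some N then 1 else 0).sum
        = Multiset.count (some N)
            ((π.map (col hT v) : List (Option V)) : Multiset (Option V)) :=
      sum_ite_eq_count _ _ π
    have hc2 : (π.map fun x => if col hT v x = some N then 1 else 0).sum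
        + (π.map fun x => if col hT v x = some N then 0 else 1).sum = π.length := by
      rw [← sum_map_add]
      have he : (π.map fun x => (if col hT v x = some N then 1 else 0)
          + (if col hT v x = some N then 0 else 1)).sum = (π.map fun _ => (1 : ℕ)).sum := by
        congr 1
        apply List.map_congr_left
        intro x _
        by_cases hc : col hT v x = some N <;> simp [hc]
      rw [he, sum_ones]
    have hsum2 : Fsum T π N + (π.map fun x => if col hT v x = some N then 1 else 0).sum
        = Fsum T π v + (π.map fun x => if col hT v x = some N then 0 else 1).sum := hsum
    have hFN : Fsum T π N < Fsum T π v := by omega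
    exact ih (Fsum T π N) (by omega) N le_rfl

end TreePairing


/-- Every tree satisfies the pairing property: for any even profile `π` of vertices of a
tree `T`, there are a pairing `P` of `π` and a vertex `v` with `D_π(P) = F_π(v)`. -/
theorem stmt_8 {V : Type*} (T : SimpleGraph V) (hT : T.IsTree)
    (π : List V) (hπ : Even π.length) :
    ∃ (P : List (V × V)) (v : V), IsPairing π P ∧ Dsum T P = Fsum T π v := by
  classical
  obtain ⟨k, hk⟩ := hπ
  obtain ⟨v0⟩ := hT.isConnected.nonempty
  obtain ⟨v, hv⟩ := TreePairing.exists_median hT π v0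
  have hcard : Multiset.card (π : Multiset V) = 2 * k := by
    simp only [Multiset.coe_card, hk]; omega
  have hcnt : ∀ N : V, (((π : Multiset V).map (TreePairing.col hT v)).count (some N)) ≤ k := by
    intro N
    have h1 := hv N
    have h2 : ((π : Multiset V).map (TreePairing.col hT v))
        = ((π.map (TreePairing.col hT v) : List (Option V)) : Multiset (Option V)) := by
      simp [Multiset.map_coe]
    rw [h2]
    omega
  obtain ⟨P, hP, hgood⟩ :=
    TreePairing.pairing_lemma (TreePairing.col hT v) k (π : Multiset V) hcard hcnt
  refine ⟨P, v, hP, ?_⟩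
  have hD : Dsum T P = (P.map fun p => T.dist p.1 v).sum + (P.map fun p => T.dist v p.2).sum := by
    unfold Dsum
    rw [← TreePairing.sum_map_add]
    congr 1
    apply List.map_congr_left
    intro p hp
    exact TreePairing.dist_add_of_good hT (hgood p hp)
  have hF : Fsum T π v = (P.map fun p => T.dist v p.1).sum + (P.map fun p => T.dist v p.2).sum := by
    unfold Fsum
    have h3 : ((π : Multiset V).map fun x => T.dist v x).sum
        = (π.map fun x => T.dist v x).sum := by
      simp [Multiset.map_coe, Multiset.sum_coe]
    rw [← h3, hP]
    simp [Multiset.map_coe, Multiset.sum_coe, List.map_map, Function.comp_def]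
  rw [hD, hF]
  congr 1
  apply congrArg
  apply List.map_congr_left
  intro p _
  exact SimpleGraph.dist_comm
end

section
/- Let G be a connected graph, let ℓ ≥ 1 and let H = G_ℓ be the ℓ-subdivision of G. For integers m and k, if G has an m-cover of size k, then H has an (mℓ + ⌊ℓ/2⌋)-cover of size k. -/
open SimpleGraph

/-- `H` is the `ℓ`-subdivision `G_ℓ` of `G`, witnessed by the embedding `φ` of the
original vertices and, for each edge `uv` of `G`, the replacement path `σ u v h` of
length `ℓ` in `H` from `φ u` to `φ v`. -/
structure IsSubdivision {V W : Type*} (G : SimpleGraph V) (H : SimpleGraph W) (ℓ : ℕ)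
    (φ : V → W) (σ : ∀ u v : V, G.Adj u v → H.Walk (φ u) (φ v)) : Prop where
  one_le : 1 ≤ ℓ
  inj : Function.Injective φ
  len : ∀ u v (h : G.Adj u v), (σ u v h).length = ℓ
  isPath : ∀ u v (h : G.Adj u v), (σ u v h).IsPath
  symm : ∀ u v (h : G.Adj u v), σ v u h.symm = (σ u v h).reverse
  /-- replacement paths of distinct edges meet only in original vertices -/
  disjoint : ∀ u v (h : G.Adj u v), ∀ u' v' (h' : G.Adj u' v'), s(u, v) ≠ s(u', v') →
    ∀ w : W, w ∈ (σ u v h).support → w ∈ (σ u' v' h').support → w ∈ Set.range φ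
  /-- the only original vertices on a replacement path are its two ends -/
  ends : ∀ u v (h : G.Adj u v), ∀ w ∈ (σ u v h).support,
    w ∈ Set.range φ → w = φ u ∨ w = φ v
  /-- every vertex of `H` is original or lies on a replacement path -/
  cover : ∀ w : W, w ∈ Set.range φ ∨ ∃ u v h, w ∈ (σ u v h).support
  /-- the edges of `H` are exactly the edges of the replacement paths -/
  adj_iff : ∀ a b : W, H.Adj a b ↔ ∃ u v h, s(a, b) ∈ (σ u v h).edges

/-- The walk of `H = G_ℓ` obtained from a walk of `G` by replacing each edge by its
replacement path: the `ℓ`-subdivision of the given walk. -/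
def subdivWalk {V W : Type*} {G : SimpleGraph V} {H : SimpleGraph W} {φ : V → W}
    (σ : ∀ u v : V, G.Adj u v → H.Walk (φ u) (φ v)) :
    ∀ {u v : V}, G.Walk u v → H.Walk (φ u) (φ v)
  | _, _, SimpleGraph.Walk.nil => SimpleGraph.Walk.nil
  | _, _, SimpleGraph.Walk.cons h q => (σ _ _ h).append (subdivWalk σ q)

section AuxLemmas

variable {V W : Type*} {G : SimpleGraph V} {H : SimpleGraph W}

/-- On a path, `getVert` is injective (within the length bound). -/
lemma path_getVert_inj {x y : V} {p : G.Walk x y} (hp : p.IsPath) :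
    ∀ {i j : ℕ}, i ≤ p.length → j ≤ p.length → p.getVert i = p.getVert j → i = j := by
  induction p with
  | nil => intro i j hi hj _; simp only [SimpleGraph.Walk.length_nil] at hi hj; omega
  | @cons x c y h q ih =>
    rw [SimpleGraph.Walk.cons_isPath_iff] at hp
    intro i j hi hj hij
    rw [SimpleGraph.Walk.length_cons] at hi hj
    match i, j with
    | 0, 0 => rfl
    | 0, j+1 =>
      exfalso
      apply hp.2
      rw [SimpleGraph.Walk.mem_support_iff_exists_getVert]
      refine ⟨j, ?_, by omega⟩
      simpa [SimpleGraph.Walk.getVert_zero, SimpleGraph.Walk.getVert_cons_succ] using hij.symm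
    | i+1, 0 =>
      exfalso
      apply hp.2
      rw [SimpleGraph.Walk.mem_support_iff_exists_getVert]
      refine ⟨i, ?_, by omega⟩
      simpa [SimpleGraph.Walk.getVert_zero, SimpleGraph.Walk.getVert_cons_succ] using hij
    | i+1, j+1 =>
      have := ih (i := i) (j := j) hp.1 (by omega) (by omega)
        (by simpa [SimpleGraph.Walk.getVert_cons_succ] using hij)
      omega

/-- Every edge of a walk joins two consecutive `getVert`s. -/
lemma exists_getVert_of_mem_edges {x y a b : V} {p : G.Walk x y}
    (he : s(a, b) ∈ p.edges) :
    ∃ n, n < p.length ∧ s(a, b) = s(p.getVert n, p.getVert (n + 1)) := by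
  induction p with
  | nil => simp at he
  | @cons x c y h q ih =>
    rw [SimpleGraph.Walk.edges_cons, List.mem_cons] at he
    rcases he with he | he
    · refine ⟨0, by simp [SimpleGraph.Walk.length_cons], ?_⟩
      rw [he]
      simp [SimpleGraph.Walk.getVert_zero, SimpleGraph.Walk.getVert_cons_succ]
    · obtain ⟨n, hn, hseq⟩ := ih he
      refine ⟨n + 1, by rw [SimpleGraph.Walk.length_cons]; omega, ?_⟩
      simpa [SimpleGraph.Walk.getVert_cons_succ] using hseq

/-- On a path, the neighbours along the path of the vertex at position `i`
are at positions `i - 1` and `i + 1`. -/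
lemma neighbor_of_mem_edges {x y w b : V} {p : G.Walk x y} (hp : p.IsPath)
    {i : ℕ} (hi : i ≤ p.length) (hw : p.getVert i = w) (he : s(w, b) ∈ p.edges) :
    (1 ≤ i ∧ b = p.getVert (i - 1)) ∨ (i < p.length ∧ b = p.getVert (i + 1)) := by
  obtain ⟨n, hn, hseq⟩ := exists_getVert_of_mem_edges he
  rw [Sym2.eq_iff] at hseq
  rcases hseq with ⟨h1, h2⟩ | ⟨h1, h2⟩
  · have hin : i = n := path_getVert_inj hp hi (le_of_lt hn) (by rw [hw, h1])
    right
    exact ⟨by omega, by rw [h2, hin]⟩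
  · have hin : i = n + 1 := path_getVert_inj hp hi (by omega) (by rw [hw, h1])
    left
    refine ⟨by omega, by rw [h2, hin]; simp⟩

variable {ℓ : ℕ} {φ : V → W} {σ : ∀ u v : V, G.Adj u v → H.Walk (φ u) (φ v)}

lemma subdivWalk_length (hs : IsSubdivision G H ℓ φ σ) :
    ∀ {u v : V} (p : G.Walk u v), (subdivWalk σ p).length = ℓ * p.length := by
  intro u v p
  induction p with
  | nil => simp [subdivWalk]
  | cons h q ih =>
    simp only [subdivWalk, SimpleGraph.Walk.length_append, hs.len, ih,
      SimpleGraph.Walk.length_cons]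
    ring

lemma subdivWalk_support (hs : IsSubdivision G H ℓ φ σ) :
    ∀ {u v : V} (p : G.Walk u v) (x : V), x ∈ p.support →
      φ x ∈ (subdivWalk σ p).support := by
  intro u v p
  induction p with
  | nil => intro x hx; simp at hx; simp [subdivWalk, hx]
  | @cons u c v h q ih =>
    intro x hx
    rw [SimpleGraph.Walk.support_cons, List.mem_cons] at hx
    show φ x ∈ ((σ u c h).append (subdivWalk σ q)).support
    rw [SimpleGraph.Walk.mem_support_append_iff]
    rcases hx with rfl | hx
    · exact Or.inl (SimpleGraph.Walk.start_mem_support _)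
    · exact Or.inr (ih x hx)

lemma subdiv_interior_not_range (hs : IsSubdivision G H ℓ φ σ)
    {u v : V} (h : G.Adj u v) {j : ℕ} (hj0 : 0 < j) (hjl : j < ℓ) :
    (σ u v h).getVert j ∉ Set.range φ := by
  intro hr
  have hpl : (σ u v h).length = ℓ := hs.len u v h
  have hpp : (σ u v h).IsPath := hs.isPath u v h
  have hmem : (σ u v h).getVert j ∈ (σ u v h).support := by
    rw [SimpleGraph.Walk.mem_support_iff_exists_getVert]
    exact ⟨j, rfl, by omega⟩
  rcases hs.ends u v h _ hmem hr with h2 | h2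
  · have : (σ u v h).getVert j = (σ u v h).getVert 0 := by
      rw [h2, SimpleGraph.Walk.getVert_zero]
    have := path_getVert_inj hpp (by omega) (by omega) this
    omega
  · have : (σ u v h).getVert j = (σ u v h).getVert (σ u v h).length := by
      rw [h2, SimpleGraph.Walk.getVert_length]
    have := path_getVert_inj hpp (by omega) le_rfl this
    omega

/-- The key lower-bound estimate: walks in the subdivision to an original
vertex are at least as long as `ℓ` times the corresponding distance in `G`. -/
lemma subdiv_key (hG : G.Connected) (hs : IsSubdivision G H ℓ φ σ)
    {w c : W} (q : H.Walk w c) :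
    ∀ (a : V), c = φ a →
      (∀ u, w = φ u → ℓ * G.dist u a ≤ q.length) ∧
      (∀ (u v : V) (h : G.Adj u v) (i : ℕ), i ≤ ℓ → w = (σ u v h).getVert i →
        w ∉ Set.range φ →
        min (i + ℓ * G.dist u a) ((ℓ - i) + ℓ * G.dist v a) ≤ q.length) := by
  induction q with
  | nil =>
    intro a hc
    subst hc
    constructor
    · intro u hu
      have hau : a = u := hs.inj hu
      subst hau
      simp [SimpleGraph.dist_self]
    · intro u v h i hi hw hn
      exact absurd ⟨a, rfl⟩ hn
  | @cons w b c hadj q' ih =>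
    intro a hc
    obtain ⟨IH1, IH2⟩ := ih a hc
    obtain ⟨u₀, v₀, h₀, he₀⟩ := (hs.adj_iff w b).mp hadj
    constructor
    · -- w is an original vertex φ u
      rintro u rfl
      rw [SimpleGraph.Walk.length_cons]
      have hwmem : φ u ∈ (σ u₀ v₀ h₀).support :=
        SimpleGraph.Walk.fst_mem_support_of_mem_edges _ he₀
      obtain ⟨v', h', e'⟩ : ∃ (v' : V) (h' : G.Adj u v'),
          s(φ u, b) ∈ (σ u v' h').edges := by
        rcases hs.ends u₀ v₀ h₀ _ hwmem ⟨u, rfl⟩ with h1 | h1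
        · have h2 : u = u₀ := hs.inj h1
          subst h2
          exact ⟨v₀, h₀, he₀⟩
        · have h2 : u = v₀ := hs.inj h1
          subst h2
          refine ⟨u₀, h₀.symm, ?_⟩
          have hrev : σ u u₀ h₀.symm = (σ u₀ u h₀).reverse := hs.symm u₀ u h₀
          rw [hrev, SimpleGraph.Walk.edges_reverse, List.mem_reverse]
          exact he₀
      have hpl : (σ u v' h').length = ℓ := hs.len u v' h'
      have hpp : (σ u v' h').IsPath := hs.isPath u v' h'
      have h0 : (σ u v' h').getVert 0 = φ u := SimpleGraph.Walk.getVert_zero _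
      have hone : 1 ≤ ℓ := hs.one_le
      rcases neighbor_of_mem_edges hpp (i := 0) (by omega) h0 e' with ⟨h1, _⟩ | ⟨_, hb0⟩
      · omega
      · -- b is the vertex at position 1 on σ u v'
        have hb : b = (σ u v' h').getVert 1 := by simpa using hb0
        have hdle : G.dist u a ≤ G.dist v' a + 1 := by
          have t1 : G.dist u a ≤ G.dist u v' + G.dist v' a := hG.dist_triangle
          have t2 : G.dist u v' ≤ 1 := by
            have := SimpleGraph.dist_le (SimpleGraph.Walk.cons h' SimpleGraph.Walk.nil)
            simpa using this
          omega
        have hAB : ℓ * G.dist u a ≤ ℓ * G.dist v' a + ℓ := by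
          calc ℓ * G.dist u a ≤ ℓ * (G.dist v' a + 1) := Nat.mul_le_mul_left _ hdle
            _ = ℓ * G.dist v' a + ℓ := by ring
        by_cases hb' : b ∈ Set.range φ
        · -- then b = φ v' and ℓ = 1
          have hbmem : b ∈ (σ u v' h').support := by
            rw [SimpleGraph.Walk.mem_support_iff_exists_getVert]
            exact ⟨1, hb.symm, by omega⟩
          rcases hs.ends u v' h' b hbmem hb' with h2 | h2
          · exact absurd h2.symm hadj.ne
          · have hl1 : (1 : ℕ) = ℓ := by
              have heq : (σ u v' h').getVert 1 = (σ u v' h').getVert (σ u v' h').length :=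
                (hb.symm.trans h2).trans (SimpleGraph.Walk.getVert_length _).symm
              have := path_getVert_inj hpp (by omega) le_rfl heq
              omega
            have hIH := IH1 v' h2
            omega
        · have hIH := IH2 u v' h' 1 (by omega) hb hb'
          set A := ℓ * G.dist u a with hA
          set B := ℓ * G.dist v' a with hB
          omega
    · -- w is an interior vertex of σ u v at position i
      intro u v h i hi hw hn
      rw [SimpleGraph.Walk.length_cons]
      have hpl : (σ u v h).length = ℓ := hs.len u v h
      have hpp : (σ u v h).IsPath := hs.isPath u v h
      have hi0 : 0 < i := by
        rcases Nat.eq_zero_or_pos i with h0 | h0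
        · exfalso; apply hn; subst h0
          rw [hw, SimpleGraph.Walk.getVert_zero]; exact ⟨u, rfl⟩
        · exact h0
      have hiu : i < ℓ := by
        rcases lt_or_eq_of_le hi with h0 | h0
        · exact h0
        · exfalso; apply hn
          rw [hw, h0, ← hpl, SimpleGraph.Walk.getVert_length]
          exact ⟨v, rfl⟩
      have hwmem : w ∈ (σ u v h).support := by
        rw [SimpleGraph.Walk.mem_support_iff_exists_getVert]
        exact ⟨i, hw.symm, by omega⟩
      have hwmem₀ : w ∈ (σ u₀ v₀ h₀).support :=
        SimpleGraph.Walk.fst_mem_support_of_mem_edges _ he₀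
      have hsame : s(u, v) = s(u₀, v₀) := by
        by_contra hne
        exact hn (hs.disjoint u v h u₀ v₀ h₀ hne w hwmem hwmem₀)
      have he : s(w, b) ∈ (σ u v h).edges := by
        rw [Sym2.eq_iff] at hsame
        rcases hsame with ⟨h1, h2⟩ | ⟨h1, h2⟩
        · subst h1; subst h2; exact he₀
        · subst h1; subst h2
          have hrev : σ v u h₀ = (σ u v h).reverse := hs.symm u v h
          rw [hrev, SimpleGraph.Walk.edges_reverse, List.mem_reverse] at he₀
          exact he₀
      rcases neighbor_of_mem_edges hpp (by omega : i ≤ (σ u v h).length) hw.symm he with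
        ⟨h1, hb⟩ | ⟨h1, hb⟩
      · -- b at position i - 1
        rcases Nat.eq_zero_or_pos (i - 1) with hj | hj
        · -- b = φ u
          have hb' : b = φ u := by rw [hb, hj, SimpleGraph.Walk.getVert_zero]
          have hIH := IH1 u hb'
          set A := ℓ * G.dist u a with hA
          set B := ℓ * G.dist v a with hB
          omega
        · have hbn : b ∉ Set.range φ := by
            rw [hb]; exact subdiv_interior_not_range hs h (by omega) (by omega)
          have hIH := IH2 u v h (i - 1) (by omega) hb hbn
          set A := ℓ * G.dist u a with hA
          set B := ℓ * G.dist v a with hB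
          omega
      · -- b at position i + 1
        rcases Nat.lt_or_ge (i + 1) ℓ with hj | hj
        · have hbn : b ∉ Set.range φ := by
            rw [hb]; exact subdiv_interior_not_range hs h (by omega) (by omega)
          have hIH := IH2 u v h (i + 1) (by omega) hb hbn
          set A := ℓ * G.dist u a with hA
          set B := ℓ * G.dist v a with hB
          omega
        · -- i + 1 = ℓ, b = φ v
          have hb' : b = φ v := by
            rw [hb, show i + 1 = (σ u v h).length by omega,
              SimpleGraph.Walk.getVert_length]
          have hIH := IH1 v hb'
          set A := ℓ * G.dist u a with hA
          set B := ℓ * G.dist v a with hB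
          omega

lemma subdiv_connected (hG : G.Connected) (hs : IsSubdivision G H ℓ φ σ) :
    H.Connected := by
  classical
  have hne : Nonempty V := hG.nonempty
  have hreach : ∀ w : W, ∃ u : V, H.Reachable w (φ u) := by
    intro w
    rcases hs.cover w with ⟨u, rfl⟩ | ⟨u, v, h, hw⟩
    · exact ⟨u, SimpleGraph.Reachable.refl _⟩
    · exact ⟨u, ⟨((σ u v h).takeUntil w hw).reverse⟩⟩
  rw [SimpleGraph.connected_iff]
  refine ⟨?_, hne.elim fun v0 => ⟨φ v0⟩⟩
  intro w w'
  obtain ⟨u, hu⟩ := hreach w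
  obtain ⟨u', hu'⟩ := hreach w'
  obtain ⟨p⟩ := hG u u'
  exact hu.trans (SimpleGraph.Reachable.trans ⟨subdivWalk σ p⟩ hu'.symm)

lemma subdiv_dist_phi (hG : G.Connected) (hs : IsSubdivision G H ℓ φ σ)
    (u v : V) : H.dist (φ u) (φ v) = ℓ * G.dist u v := by
  apply le_antisymm
  · obtain ⟨p, hp⟩ := hG.exists_walk_length_eq_dist u v
    have := SimpleGraph.dist_le (subdivWalk σ p)
    rwa [subdivWalk_length hs, hp] at this
  · obtain ⟨q, hq⟩ :=
      ((subdiv_connected hG hs) (φ u) (φ v)).exists_walk_length_eq_dist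
    have := (subdiv_key hG hs q v rfl).1 u rfl
    rwa [hq] at this

lemma subdiv_near_orig (hs : IsSubdivision G H ℓ φ σ) (w : W) :
    ∃ u : V, H.dist w (φ u) ≤ ℓ / 2 := by
  classical
  rcases hs.cover w with ⟨u, rfl⟩ | ⟨u, v, h, hw⟩
  · exact ⟨u, by simp [SimpleGraph.dist_self]⟩
  · have hsplit : ((σ u v h).takeUntil w hw).length
        + ((σ u v h).dropUntil w hw).length = ℓ := by
      have := congrArg SimpleGraph.Walk.length ((σ u v h).take_spec hw)
      rw [SimpleGraph.Walk.length_append] at this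
      rw [this, hs.len]
    have d1 : H.dist w (φ u) ≤ ((σ u v h).takeUntil w hw).length := by
      have := SimpleGraph.dist_le ((σ u v h).takeUntil w hw).reverse
      rwa [SimpleGraph.Walk.length_reverse] at this
    have d2 : H.dist w (φ v) ≤ ((σ u v h).dropUntil w hw).length :=
      SimpleGraph.dist_le _
    rcases le_or_gt (((σ u v h).takeUntil w hw).length) (ℓ / 2) with hc | hc
    · exact ⟨u, le_trans d1 hc⟩
    · exact ⟨v, by omega⟩

end AuxLemmas

/-- If `H = G_ℓ` is the `ℓ`-subdivision (`ℓ ≥ 1`) of a connected graph `G` and `G` has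
an `m`-cover of size `k`, then `H` has an `(mℓ + ⌊ℓ/2⌋)`-cover of size `k`. -/
theorem stmt_11 {V W : Type*} (G : SimpleGraph V) (hG : G.Connected)
    (H : SimpleGraph W) (ℓ : ℕ) (hℓ : 1 ≤ ℓ)
    (φ : V → W) (σ : ∀ u v : V, G.Adj u v → H.Walk (φ u) (φ v))
    (hsub : IsSubdivision G H ℓ φ σ)
    (m k : ℕ) (C : List (IsomPath G)) (hk : C.length = k) (hcov : IsCover G m C) :
    ∃ C' : List (IsomPath H), C'.length = k ∧ IsCover H (m * ℓ + ℓ / 2) C' := by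
  classical
  have hH : H.Connected := subdiv_connected hG hsub
  refine ⟨C.map (fun P => IsomPath.mk (φ P.first) (φ P.last) (subdivWalk σ P.walk)
      (by rw [subdivWalk_length hsub, P.isom, subdiv_dist_phi hG hsub])),
    by simp [hk], ?_⟩
  intro w
  obtain ⟨u₀, hu₀⟩ := subdiv_near_orig hsub w
  obtain ⟨P, hP, x, hx, hdx⟩ := hcov u₀
  refine ⟨_, List.mem_map_of_mem hP, φ x, subdivWalk_support hsub P.walk x hx, ?_⟩
  calc H.dist w (φ x) ≤ H.dist w (φ u₀) + H.dist (φ u₀) (φ x) := hH.dist_triangle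
    _ ≤ ℓ / 2 + m * ℓ := Nat.add_le_add hu₀ (by
        rw [subdiv_dist_phi hG hsub, Nat.mul_comm m ℓ]
        exact Nat.mul_le_mul_left _ hdx)
    _ = m * ℓ + ℓ / 2 := Nat.add_comm _ _
end

section
/- Let G be a connected graph, let ℓ ≥ 1 and let H = G_ℓ be the ℓ-subdivision of G. Let P be an isometric path of H between two original vertices u and v, and let Q = G(P) be the path of G whose ℓ-subdivision is P. If w is an original vertex such that the distance in H from w to the vertex set of P is strictly less than (r+1)ℓ for some positive integer r, then the distance in G from w to the vertex set of Q is at most r. -/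
open SimpleGraph

section AuxLemmas

open SimpleGraph Walk

variable {V W : Type*}

/-- index of the start of a walk in its support is 0 -/
lemma my_idx_start [DecidableEq W] {Γ : SimpleGraph W} {s t : W} (p : Γ.Walk s t) :
    p.support.idxOf s = 0 := by
  rw [p.support_eq_cons]; exact List.idxOf_cons_self

/-- index of the end of a path in its support is its length -/
lemma my_idx_end [DecidableEq W] {Γ : SimpleGraph W} {s t : W} (p : Γ.Walk s t)
    (hp : p.IsPath) : p.support.idxOf t = p.length := by
  induction p with
  | nil => simp
  | @cons a' b' c' h q ih =>
    rw [Walk.support_cons, Walk.length_cons]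
    rw [Walk.cons_isPath_iff] at hp
    have ht : c' ∈ q.support := q.end_mem_support
    have hne : a' ≠ c' := fun hst => hp.2 (hst ▸ ht)
    rw [List.idxOf_cons_ne _ hne, ih hp.1]

/-- an edge of a path joins consecutive vertices of its support -/
lemma my_idx_edge [DecidableEq W] {Γ : SimpleGraph W} {s t : W} (p : Γ.Walk s t)
    (hp : p.IsPath) {c d : W} (he : s(c, d) ∈ p.edges) :
    p.support.idxOf d = p.support.idxOf c + 1 ∨
      p.support.idxOf c = p.support.idxOf d + 1 := by
  induction p with
  | nil => simp at he
  | @cons a b c'' h q ih =>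
    rw [Walk.cons_isPath_iff] at hp
    rw [Walk.edges_cons, List.mem_cons] at he
    rw [Walk.support_cons]
    rcases he with he | he
    · have hb : b ∈ q.support := q.start_mem_support
      have hba : b ≠ a := fun hba => hp.2 (hba ▸ hb)
      rcases Sym2.eq_iff.mp he with ⟨rfl, rfl⟩ | ⟨rfl, rfl⟩
      · left
        rw [List.idxOf_cons_self, List.idxOf_cons_ne _ hba.symm]
        rw [q.support_eq_cons, List.idxOf_cons_self]
      · right
        rw [List.idxOf_cons_self, List.idxOf_cons_ne _ hba.symm]
        rw [q.support_eq_cons, List.idxOf_cons_self]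
    · have hc : c ∈ q.support := q.fst_mem_support_of_mem_edges he
      have hd : d ∈ q.support := q.snd_mem_support_of_mem_edges he
      have hca : a ≠ c := fun hca => hp.2 (hca ▸ hc)
      have hda : a ≠ d := fun hda => hp.2 (hda ▸ hd)
      rw [List.idxOf_cons_ne _ hca, List.idxOf_cons_ne _ hda]
      rcases ih hp.1 he with h' | h'
      · left; omega
      · right; omega

variable {G : SimpleGraph V} {H : SimpleGraph W} {ℓ : ℕ} {φ : V → W}
  {σ : ∀ u v : V, G.Adj u v → H.Walk (φ u) (φ v)}

/-- every vertex on the subdivided walk is original on `Q` or lies on a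
replacement path of an edge of `Q` -/
lemma my_subdiv_support :
    ∀ {u v : V} (Q : G.Walk u v) (z : W), z ∈ (subdivWalk σ Q).support →
      (∃ c ∈ Q.support, z = φ c) ∨
        ∃ (a : V) (b : V) (h : G.Adj a b), a ∈ Q.support ∧ b ∈ Q.support ∧ z ∈ (σ a b h).support := by
  intro u v Q
  induction Q with
  | @nil u' =>
    intro z hz
    simp only [subdivWalk, Walk.support_nil, List.mem_singleton] at hz
    exact Or.inl ⟨u', by simp, hz⟩
  | @cons a b c h q ih =>
    intro z hz
    have : subdivWalk σ (Walk.cons h q) = (σ a b h).append (subdivWalk σ q) := rfl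
    rw [this, Walk.mem_support_append_iff] at hz
    rcases hz with hz | hz
    · exact Or.inr ⟨a, b, h, by simp, by simp [q.start_mem_support], hz⟩
    · rcases ih z hz with ⟨c', hc', rfl⟩ | ⟨a', b', h', ha', hb', hs'⟩
      · exact Or.inl ⟨c', by simp [Walk.support_cons, hc'], rfl⟩
      · exact Or.inr ⟨a', b', h', by simp [Walk.support_cons, ha'],
          by simp [Walk.support_cons, hb'], hs'⟩

/-- orient a first edge of a walk starting at an original vertex -/
lemma my_orient (hsub : IsSubdivision G H ℓ φ σ) {a b : W} (hadj : H.Adj a b)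
    (x : V) (hax : a = φ x) :
    ∃ (e : V) (hxe : G.Adj x e), s(a, b) ∈ (σ x e hxe).edges := by
  obtain ⟨u', v', h', he⟩ := (hsub.adj_iff a b).mp hadj
  have has : a ∈ (σ u' v' h').support := (σ u' v' h').fst_mem_support_of_mem_edges he
  rcases hsub.ends u' v' h' a has ⟨x, hax.symm⟩ with h1 | h1
  · obtain rfl : x = u' := hsub.inj (hax ▸ h1)
    exact ⟨v', h', he⟩
  · obtain rfl : x = v' := hsub.inj (hax ▸ h1)
    refine ⟨u', h'.symm, ?_⟩
    rw [show σ x u' h'.symm = (σ u' x h').reverse from hsub.symm u' x h',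
      Walk.edges_reverse, List.mem_reverse]
    exact he

/-- an edge at a non-original vertex of a replacement path is an edge of that path -/
lemma my_seg_edge (hsub : IsSubdivision G H ℓ φ σ) {a b : V} (hab : G.Adj a b)
    {z y : W} (hz : z ∈ (σ a b hab).support) (hnz : z ∉ Set.range φ)
    (hadj : H.Adj z y) : s(z, y) ∈ (σ a b hab).edges := by
  obtain ⟨u', v', h', he⟩ := (hsub.adj_iff z y).mp hadj
  have hzs : z ∈ (σ u' v' h').support := (σ u' v' h').fst_mem_support_of_mem_edges he
  by_cases heq : s(u', v') = s(a, b)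
  · rcases Sym2.eq_iff.mp heq with ⟨h1, h2⟩ | ⟨h1, h2⟩
    · subst h1; subst h2; exact he
    · subst h1; subst h2
      have h4 := hsub.symm _ _ h'
      have h5 : s(z, y) ∈ ((σ _ _ h').reverse).edges := by
        rw [Walk.edges_reverse, List.mem_reverse]; exact he
      rw [← h4] at h5
      exact h5
  · exact absurd (hsub.disjoint u' v' h' a b hab heq z hzs hz) hnz

/-- traversal lemma: a walk from a vertex of a replacement path to an original
vertex must first leave through one of the two ends of the path -/
lemma my_F [DecidableEq W] (hsub : IsSubdivision G H ℓ φ σ) {a b : V}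
    (hab : G.Adj a b) (c : V) :
    ∀ (n : ℕ) {y : W} (T : H.Walk y (φ c)), T.length ≤ n → y ∈ (σ a b hab).support →
      (∃ T₁ : H.Walk (φ a) (φ c),
        T₁.length + (σ a b hab).support.idxOf y ≤ T.length) ∨
      (∃ T₁ : H.Walk (φ b) (φ c),
        T₁.length + (ℓ - (σ a b hab).support.idxOf y) ≤ T.length) := by
  intro n
  induction n with
  | zero =>
    intro y T hT hy
    by_cases hyr : y ∈ Set.range φ
    · rcases hsub.ends a b hab y hy hyr with rfl | rfl
      · exact Or.inl ⟨T, by rw [my_idx_start]; omega⟩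
      · exact Or.inr ⟨T, by rw [my_idx_end _ (hsub.isPath a b hab), hsub.len a b hab]; omega⟩
    · have hyc : y ≠ φ c := fun h => hyr ⟨c, h.symm⟩
      obtain ⟨y', hadj, T', rfl⟩ := T.exists_eq_cons_of_ne hyc
      rw [Walk.length_cons] at hT; omega
  | succ n ih =>
    intro y T hT hy
    by_cases hyr : y ∈ Set.range φ
    · rcases hsub.ends a b hab y hy hyr with rfl | rfl
      · exact Or.inl ⟨T, by rw [my_idx_start]; omega⟩
      · exact Or.inr ⟨T, by rw [my_idx_end _ (hsub.isPath a b hab), hsub.len a b hab]; omega⟩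
    · have hyc : y ≠ φ c := fun h => hyr ⟨c, h.symm⟩
      obtain ⟨y', hadj, T', rfl⟩ := T.exists_eq_cons_of_ne hyc
      have he : s(y, y') ∈ (σ a b hab).edges := my_seg_edge hsub hab hy hyr hadj
      have hy' : y' ∈ (σ a b hab).support := (σ a b hab).snd_mem_support_of_mem_edges he
      have hidx := my_idx_edge (σ a b hab) (hsub.isPath a b hab) he
      rw [Walk.length_cons] at hT ⊢
      rcases ih T' (by omega) hy' with ⟨T₁, h₁⟩ | ⟨T₁, h₁⟩
      · exact Or.inl ⟨T₁, by omega⟩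
      · exact Or.inr ⟨T₁, by omega⟩

/-- any walk in `H` between original vertices has length at least `ℓ` times
the distance in `G` -/
lemma my_A [DecidableEq W] (hG : G.Connected) (hsub : IsSubdivision G H ℓ φ σ) :
    ∀ (n : ℕ) (x c : V) (T : H.Walk (φ x) (φ c)), T.length ≤ n →
      ℓ * G.dist x c ≤ T.length := by
  intro n
  induction n using Nat.strong_induction_on with
  | _ n ih =>
    intro x c T hT
    by_cases hxc : x = c
    · subst hxc; simp [SimpleGraph.dist_self]
    · have hne : φ x ≠ φ c := fun h => hxc (hsub.inj h)
      obtain ⟨y, hadj, T₀, rfl⟩ := T.exists_eq_cons_of_ne hne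
      obtain ⟨e, hxe, he⟩ := my_orient hsub hadj x rfl
      have hy : y ∈ (σ x e hxe).support := (σ x e hxe).snd_mem_support_of_mem_edges he
      have hidx := my_idx_edge (σ x e hxe) (hsub.isPath x e hxe) he
      have h0 : (σ x e hxe).support.idxOf (φ x) = 0 := my_idx_start _
      have hidxy : (σ x e hxe).support.idxOf y = 1 := by omega
      rw [Walk.length_cons] at hT ⊢
      have hl := hsub.one_le
      rcases my_F hsub hxe c T₀.length T₀ le_rfl hy with ⟨T₁, h₁⟩ | ⟨T₁, h₁⟩
      · rw [hidxy] at h₁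
        have := ih T₁.length (by omega) x c T₁ le_rfl
        omega
      · rw [hidxy] at h₁
        have h2 := ih T₁.length (by omega) e c T₁ le_rfl
        have hd1 : G.dist x e = 1 := SimpleGraph.dist_eq_one_iff_adj.mpr hxe
        have hd : G.dist x c ≤ G.dist e c + 1 := by
          have := hG.dist_triangle (u := x) (v := e) (w := c)
          omega
        calc ℓ * G.dist x c ≤ ℓ * (G.dist e c + 1) := Nat.mul_le_mul_left _ hd
          _ = ℓ * G.dist e c + ℓ := by ring
          _ ≤ T₀.length + 1 := by omega

/-- any walk in `H` from a vertex of a replacement path to an original vertex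
has length at least `ℓ` times the `G`-distance from one of the ends -/
lemma my_B [DecidableEq W] (hG : G.Connected) (hsub : IsSubdivision G H ℓ φ σ)
    {a b : V} (hab : G.Adj a b) (x : V) :
    ∀ (n : ℕ) {z : W} (T : H.Walk z (φ x)), T.length ≤ n → z ∈ (σ a b hab).support →
      ∃ c, (c = a ∨ c = b) ∧ ℓ * G.dist c x ≤ T.length := by
  intro n
  induction n with
  | zero =>
    intro z T hT hz
    by_cases hzr : z ∈ Set.range φ
    · rcases hsub.ends a b hab z hz hzr with rfl | rfl
      · exact ⟨a, Or.inl rfl, my_A hG hsub T.length a x T le_rfl⟩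
      · exact ⟨b, Or.inr rfl, my_A hG hsub T.length b x T le_rfl⟩
    · have hzx : z ≠ φ x := fun h => hzr ⟨x, h.symm⟩
      obtain ⟨y, hadj, T', rfl⟩ := T.exists_eq_cons_of_ne hzx
      rw [Walk.length_cons] at hT; omega
  | succ n ih =>
    intro z T hT hz
    by_cases hzr : z ∈ Set.range φ
    · rcases hsub.ends a b hab z hz hzr with rfl | rfl
      · exact ⟨a, Or.inl rfl, my_A hG hsub T.length a x T le_rfl⟩
      · exact ⟨b, Or.inr rfl, my_A hG hsub T.length b x T le_rfl⟩
    · have hzx : z ≠ φ x := fun h => hzr ⟨x, h.symm⟩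
      obtain ⟨y, hadj, T', rfl⟩ := T.exists_eq_cons_of_ne hzx
      have he : s(z, y) ∈ (σ a b hab).edges := my_seg_edge hsub hab hz hzr hadj
      have hy : y ∈ (σ a b hab).support := (σ a b hab).snd_mem_support_of_mem_edges he
      rw [Walk.length_cons] at hT ⊢
      obtain ⟨c, hc, hle⟩ := ih T' (by omega) hy
      exact ⟨c, hc, by omega⟩

end AuxLemmas
/-- Let `H = G_ℓ` be the `ℓ`-subdivision (`ℓ ≥ 1`) of a connected graph `G`, let
`P = subdivWalk σ Q` be an isometric path of `H` between two original vertices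
`φ u, φ v`, where `Q = G(P)` is the path of `G` whose `ℓ`-subdivision is `P`. If `w` is
an original vertex with `d_H(φ w, V(P)) < (r+1)ℓ` for a positive integer `r`, then
`d_G(w, V(Q)) ≤ r`. -/
theorem stmt_12 {V W : Type*} (G : SimpleGraph V) (hG : G.Connected)
    (H : SimpleGraph W) (ℓ : ℕ) (hℓ : 1 ≤ ℓ)
    (φ : V → W) (σ : ∀ u v : V, G.Adj u v → H.Walk (φ u) (φ v))
    (hsub : IsSubdivision G H ℓ φ σ)
    (u v : V) (Q : G.Walk u v) (hQpath : Q.IsPath)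
    (hPiso : IsGeodesicWalk H (subdivWalk σ Q))
    (w : V) (r : ℕ) (hr : 1 ≤ r)
    (hnear : ∃ z ∈ (subdivWalk σ Q).support, H.dist (φ w) z < (r + 1) * ℓ) :
    ∃ z ∈ Q.support, G.dist w z ≤ r := by
  classical
  obtain ⟨z, hz, hdz⟩ := hnear
  -- `φ w` and `z` are reachable from each other in `H`
  have hru : H.Reachable (φ w) (φ u) := by
    obtain ⟨Qw⟩ := hG.preconnected w u
    exact ⟨subdivWalk σ Qw⟩
  have hrz : H.Reachable (φ u) z := ⟨(subdivWalk σ Q).takeUntil z hz⟩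
  obtain ⟨T, hTlen⟩ := (hru.trans hrz).exists_walk_length_eq_dist
  have hTlt : T.length < ℓ * (r + 1) := by
    rw [hTlen, Nat.mul_comm]; exact hdz
  rcases my_subdiv_support Q z hz with ⟨c, hc, rfl⟩ | ⟨a, b, hab, ha, hb, hzs⟩
  · have hA := my_A hG hsub T.length w c T le_rfl
    have : G.dist w c < r + 1 :=
      Nat.lt_of_mul_lt_mul_left (lt_of_le_of_lt hA hTlt)
    exact ⟨c, hc, by omega⟩
  · have hrev : z ∈ (σ a b hab).support := hzs
    obtain ⟨c, hcab, hcle⟩ :=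
      my_B hG hsub hab w T.reverse.length T.reverse le_rfl hrev
    rw [Walk.length_reverse] at hcle
    have hlt : G.dist c w < r + 1 :=
      Nat.lt_of_mul_lt_mul_left (lt_of_le_of_lt hcle hTlt)
    refine ⟨c, ?_, ?_⟩
    · rcases hcab with rfl | rfl
      · exact ha
      · exact hb
    · rw [SimpleGraph.dist_comm]; omega
end

section
/- Let G be a connected δ-thin graph, let r, u, v, x be vertices of G with d(r,u) ≤ d(r,v), and let R ≥ 0 be an integer. Suppose there exists an isometric path P from r to x such that d(u, V(P)) ≤ R and d(v, V(P)) ≤ R. Then for every isometric path σ from r to v, d(u, V(σ)) ≤ R + 2δ. -/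
open SimpleGraph

private lemma dist_getVert_end' {V : Type*} {G : SimpleGraph V} :
    ∀ {s t : V} (p : G.Walk s t) (i : ℕ), G.dist (p.getVert i) t ≤ p.length - i := by
  intro s t p
  induction p with
  | nil =>
    intro i
    rw [Walk.getVert_of_length_le _ (Nat.zero_le i)]
    simp
  | cons h q ih =>
    intro i
    cases i with
    | zero => simpa using SimpleGraph.dist_le (Walk.cons h q)
    | succ n => simpa [Walk.getVert_cons_succ] using ih n

private lemma dist_getVert_start' {V : Type*} {G : SimpleGraph V} (hG : G.Connected) :
    ∀ {s t : V} (p : G.Walk s t) (i : ℕ), G.dist s (p.getVert i) ≤ i := by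
  intro s t p
  induction p with
  | nil =>
    intro i
    rw [Walk.getVert_of_length_le _ (Nat.zero_le i)]
    simp only [SimpleGraph.dist_self]
    exact Nat.zero_le i
  | @cons a b c h q ih =>
    intro i
    cases i with
    | zero => simp
    | succ n =>
      calc G.dist a ((Walk.cons h q).getVert (n+1)) = G.dist a (q.getVert n) := by
              rw [Walk.getVert_cons_succ]
        _ ≤ G.dist a b + G.dist b (q.getVert n) := hG.dist_triangle
        _ ≤ n + 1 := by
            have h1 : G.dist a b = 1 := SimpleGraph.dist_eq_one_iff_adj.mpr h
            have := ih n
            omega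

private lemma near_path_sum' {V : Type*} [DecidableEq V] {G : SimpleGraph V} (hG : G.Connected)
    {r x w : V} {R : ℕ} (P : G.Walk r x) (hP : P.length = G.dist r x)
    (h : ∃ a ∈ P.support, G.dist w a ≤ R) :
    G.dist w r + G.dist w x ≤ 2 * R + G.dist r x ∧ G.dist r w ≤ G.dist r x + R := by
  obtain ⟨a, ha, hwa⟩ := h
  have hsplit : (P.takeUntil a ha).length + (P.dropUntil a ha).length = P.length := by
    have := congrArg Walk.length (P.take_spec ha)
    rw [Walk.length_append] at this
    exact this
  have h1 : G.dist r a ≤ (P.takeUntil a ha).length := SimpleGraph.dist_le _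
  have h2 : G.dist a x ≤ (P.dropUntil a ha).length := SimpleGraph.dist_le _
  have hw1 : G.dist w r ≤ G.dist w a + G.dist a r := hG.dist_triangle
  have hw2 : G.dist w x ≤ G.dist w a + G.dist a x := hG.dist_triangle
  have hc : G.dist a r = G.dist r a := SimpleGraph.dist_comm ..
  have hc2 : G.dist r w = G.dist w r := SimpleGraph.dist_comm ..
  omega

/-- In a connected `δ`-thin graph, if `d(r,u) ≤ d(r,v)` and some isometric path `P` from
`r` to `x` satisfies `d(u, V(P)) ≤ R` and `d(v, V(P)) ≤ R`, then every isometric path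
`σ` from `r` to `v` satisfies `d(u, V(σ)) ≤ R + 2δ`. -/
theorem stmt_14 {V : Type*} (G : SimpleGraph V) (hG : G.Connected)
    (δ : ℝ) (hδ : 0 ≤ δ) (hthin : IsThin G δ)
    (r u v x : V) (hd : G.dist r u ≤ G.dist r v) (R : ℕ)
    (P : G.Walk r x) (hP : IsGeodesicWalk G P)
    (hu : ∃ w ∈ P.support, G.dist u w ≤ R)
    (hv : ∃ w ∈ P.support, G.dist v w ≤ R) :
    ∀ σ : G.Walk r v, IsGeodesicWalk G σ →
      ∃ w ∈ σ.support, (G.dist u w : ℝ) ≤ (R : ℝ) + 2 * δ := by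
  classical
  intro σ hσ
  obtain ⟨T, hT⟩ := hG.exists_walk_length_eq_dist r u
  obtain ⟨Qxu, hQxu⟩ := hG.exists_walk_length_eq_dist x u
  obtain ⟨Qxv, hQxv⟩ := hG.exists_walk_length_eq_dist x v
  obtain ⟨h1, h1'⟩ := near_path_sum' hG P hP hu
  obtain ⟨h2, _⟩ := near_path_sum' hG P hP hv
  set k := G.dist r u - R with hk
  have hPlen : P.length = G.dist r x := hP
  have hσlen : σ.length = G.dist r v := hσ
  have hkP : k ≤ P.length := by omega
  have htri1 : G.dist x u ≤ G.dist x r + G.dist r u := hG.dist_triangle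
  have htri2 : G.dist x v ≤ G.dist x r + G.dist r v := hG.dist_triangle
  have hcxr : G.dist x r = G.dist r x := SimpleGraph.dist_comm ..
  have hcur : G.dist u r = G.dist r u := SimpleGraph.dist_comm ..
  have hcvr : G.dist v r = G.dist r v := SimpleGraph.dist_comm ..
  have hcux : G.dist u x = G.dist x u := SimpleGraph.dist_comm ..
  have hcvx : G.dist v x = G.dist x v := SimpleGraph.dist_comm ..
  have g1 : 2 * k + G.dist x u ≤ G.dist x r + G.dist r u := by omega
  have g2 : 2 * k + G.dist x v ≤ G.dist x r + G.dist r v := by omega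
  have t1 : (G.dist (P.getVert k) (T.getVert k) : ℝ) ≤ δ := by
    refine (hthin r x u P T Qxu hP hT hQxu k hkP).1 ?_
    have g1' : ((2 * k + G.dist x u : ℕ) : ℝ) ≤ ((G.dist x r + G.dist r u : ℕ) : ℝ) := by
      exact_mod_cast g1
    unfold gromov
    push_cast at g1' ⊢
    linarith
  have t2 : (G.dist (P.getVert k) (σ.getVert k) : ℝ) ≤ δ := by
    refine (hthin r x v P σ Qxv hP hσ hQxv k hkP).1 ?_
    have g2' : ((2 * k + G.dist x v : ℕ) : ℝ) ≤ ((G.dist x r + G.dist r v : ℕ) : ℝ) := by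
      exact_mod_cast g2
    unfold gromov
    push_cast at g2' ⊢
    linarith
  have hTu : G.dist (T.getVert k) u ≤ R := by
    have hend := dist_getVert_end' T k
    rw [hT] at hend
    omega
  refine ⟨σ.getVert k, ?_, ?_⟩
  · exact Walk.mem_support_iff_exists_getVert.mpr ⟨k, rfl, by omega⟩
  · have trn : G.dist u (σ.getVert k) ≤
        G.dist (T.getVert k) u + (G.dist (P.getVert k) (T.getVert k)
          + G.dist (P.getVert k) (σ.getVert k)) := by
      have tri : G.dist u (σ.getVert k) ≤
          G.dist u (T.getVert k) + G.dist (T.getVert k) (σ.getVert k) := hG.dist_triangle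
      have tri2 : G.dist (T.getVert k) (σ.getVert k) ≤
          G.dist (T.getVert k) (P.getVert k) + G.dist (P.getVert k) (σ.getVert k) :=
        hG.dist_triangle
      have c1 : G.dist u (T.getVert k) = G.dist (T.getVert k) u := SimpleGraph.dist_comm ..
      have c2 : G.dist (T.getVert k) (P.getVert k) = G.dist (P.getVert k) (T.getVert k) :=
        SimpleGraph.dist_comm ..
      omega
    have trn' : (G.dist u (σ.getVert k) : ℝ) ≤
        (G.dist (T.getVert k) u : ℝ) + ((G.dist (P.getVert k) (T.getVert k) : ℝ)
          + (G.dist (P.getVert k) (σ.getVert k) : ℝ)) := by exact_mod_cast trn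
    have hTu' : (G.dist (T.getVert k) u : ℝ) ≤ (R : ℝ) := by exact_mod_cast hTu
    linarith
end

section
/- Let T be a tree, r a vertex of T, and let C be an (r,R)-cover of T with |C| = 2k−1. Let π be the profile of length 2k consisting of all end-vertices of the paths in C (namely r together with the 2k−1 other end-vertices). Then there exists a pairing P of π such that the collection { σ(x,y) : {x,y} ∈ P } of k paths (the unique path of T between each pair) is an R-cover of T. -/
open SimpleGraph

section Aux
variable {V : Type*} {T : SimpleGraph V}

lemma dist_add_of_mem_geo (hT : T.IsTree) {a b w : V} (p : T.Walk a b) (hp : p.length = T.dist a b)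
    (hw : w ∈ p.support) : T.dist a w + T.dist w b = T.dist a b := by
  classical
  have h1 := SimpleGraph.dist_le (p.takeUntil w hw)
  have h2 := SimpleGraph.dist_le (p.dropUntil w hw)
  have h3 : (p.takeUntil w hw).length + (p.dropUntil w hw).length = p.length := by
    rw [← Walk.length_append, Walk.take_spec]
  have h4 := hT.isConnected.dist_triangle (u := a) (v := w) (w := b)
  omega

lemma tau_geodesic (hT : T.IsTree) (τ : ∀ x y : V, T.Walk x y) (hτ : ∀ x y : V, (τ x y).IsPath) (a b : V) : (τ a b).length = T.dist a b := by
  obtain ⟨p, hp, hl⟩ := hT.isConnected.exists_path_of_dist a b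
  rw [(hT.existsUnique_path a b).unique (hτ a b) hp, hl]

lemma mem_tau_iff (hT : T.IsTree) (τ : ∀ x y : V, T.Walk x y) (hτ : ∀ x y : V, (τ x y).IsPath) {a b w : V} :
    w ∈ (τ a b).support ↔ T.dist a w + T.dist w b = T.dist a b := by
  constructor
  · exact fun hw => dist_add_of_mem_geo hT _ (tau_geodesic hT τ hτ a b) hw
  · intro h
    obtain ⟨p1, h1⟩ := hT.isConnected.exists_walk_length_eq_dist a w
    obtain ⟨p2, h2⟩ := hT.isConnected.exists_walk_length_eq_dist w b
    have hlen : (p1.append p2).length = T.dist a b := by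
      rw [Walk.length_append, h1, h2, h]
    have hpath := (p1.append p2).isPath_of_length_eq_dist hlen
    rw [(hT.existsUnique_path a b).unique (hτ a b) hpath]
    rw [Walk.mem_support_append_iff]
    exact Or.inl p1.end_mem_support

lemma mem_tau_or (hT : T.IsTree) (τ : ∀ x y : V, T.Walk x y) (hτ : ∀ x y : V, (τ x y).IsPath) {a b w : V} (c : V) (hw : w ∈ (τ a b).support) :
    w ∈ (τ a c).support ∨ w ∈ (τ c b).support := by
  classical
  have hb := ((τ a c).append (τ c b)).bypass_isPath
  have : τ a b = ((τ a c).append (τ c b)).bypass :=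
    (hT.existsUnique_path a b).unique (hτ a b) hb
  rw [this] at hw
  have := Walk.support_bypass_subset _ hw
  rwa [Walk.mem_support_append_iff] at this

end Aux

section MS
variable {V : Type*} (T : SimpleGraph V)

/-- flattening of a multiset of pairs -/
def flatMS (S : Multiset (V × V)) : Multiset V := S.map Prod.fst + S.map Prod.snd

noncomputable def dMS (S : Multiset (V × V)) : ℕ := (S.map fun p => T.dist p.1 p.2).sum

variable {T}

lemma flatMS_cons (p : V × V) (S : Multiset (V × V)) :
    flatMS (p ::ₘ S) = p.1 ::ₘ p.2 ::ₘ flatMS S := by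
  simp only [flatMS, Multiset.map_cons, Multiset.cons_add, Multiset.add_cons]
  rw [Multiset.cons_swap]

lemma dMS_cons (p : V × V) (S : Multiset (V × V)) :
    dMS T (p ::ₘ S) = T.dist p.1 p.2 + dMS T S := by
  simp [dMS]

lemma isPairing_iff (π : List V) (P : List (V × V)) :
    IsPairing π P ↔ (π : Multiset V) = flatMS (P : Multiset (V × V)) := by
  simp [IsPairing, flatMS]

lemma dsum_eq (P : List (V × V)) : Dsum T P = dMS T (P : Multiset (V × V)) := by
  simp [Dsum, dMS]

lemma extractMS {x : V} {S : Multiset (V × V)} (hx : x ∈ flatMS S) :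
    ∃ (y : V) (S' : Multiset (V × V)), S' ≤ S ∧ flatMS S = x ::ₘ y ::ₘ flatMS S' ∧
      dMS T S = T.dist x y + dMS T S' ∧ ∃ p ∈ S, (x = p.1 ∧ y = p.2) ∨ (x = p.2 ∧ y = p.1) := by
  classical
  simp only [flatMS, Multiset.mem_add, Multiset.mem_map] at hx
  obtain ⟨p, hp, rfl⟩ | ⟨p, hp, rfl⟩ := hx
  · refine ⟨p.2, S.erase p, Multiset.erase_le _ _, ?_, ?_, p, hp, Or.inl ⟨rfl, rfl⟩⟩
    · conv_lhs => rw [← Multiset.cons_erase hp]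
      rw [flatMS_cons]
    · conv_lhs => rw [← Multiset.cons_erase hp]
      rw [dMS_cons]
  · refine ⟨p.1, S.erase p, Multiset.erase_le _ _, ?_, ?_, p, hp, Or.inr ⟨rfl, rfl⟩⟩
    · conv_lhs => rw [← Multiset.cons_erase hp]
      rw [flatMS_cons, Multiset.cons_swap]
    · conv_lhs => rw [← Multiset.cons_erase hp]
      rw [dMS_cons, T.dist_comm]

lemma dMS_le (hT : T.IsTree) (r : V) (S : Multiset (V × V)) :
    dMS T S ≤ ((flatMS S).map fun x => T.dist r x).sum := by
  simp only [flatMS, Multiset.map_add, Multiset.sum_add, Multiset.map_map]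
  have := Multiset.sum_map_le_sum_map (s := S) (fun p => T.dist p.1 p.2)
    (fun p => T.dist p.1 r + T.dist r p.2) (fun p _ => hT.isConnected.dist_triangle)
  calc dMS T S ≤ (S.map fun p => T.dist p.1 r + T.dist r p.2).sum := this
    _ = _ := by
      rw [Multiset.sum_map_add]
      simp [T.dist_comm]

def pairUp {α : Type*} : List α → List (α × α)
  | a :: b :: t => (a, b) :: pairUp t
  | _ => []

lemma pairUp_spec {α : Type*} : ∀ l : List α, l.length % 2 = 0 → IsPairing l (pairUp l)
  | [], _ => by simp [IsPairing, pairUp]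
  | [a], h => by simp at h
  | a :: b :: t, h => by
    have ht : t.length % 2 = 0 := by simp only [List.length_cons] at h; omega
    have ih := pairUp_spec t ht
    simp only [IsPairing, pairUp, List.map_cons, ← Multiset.cons_coe,
      Multiset.cons_add, Multiset.add_cons] at ih ⊢
    rw [ih]
    rw [Multiset.cons_swap]

end MS

/-- Let `T` be a tree, `r` a vertex, and `C` (given as a list `L` of isometric paths
rooted at `r`, paired with their other end-vertices) an `(r,R)`-cover of `T` with
`|C| = 2k−1`. Let `π = r :: (other end-vertices)` be the profile of length `2k` of all
end-vertices of paths in `C`. Then there is a pairing `P` of `π` such that the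
collection `{ τ(x,y) : {x,y} ∈ P }` of the `k` (unique) paths of `T` between the pairs
is an `R`-cover of `T`. -/
theorem stmt_15 {V : Type*} (T : SimpleGraph V) (hT : T.IsTree)
    (r : V) (R k : ℕ) (hk : 1 ≤ k)
    (L : List ((x : V) × T.Walk r x))
    (hgeo : ∀ Q ∈ L, IsGeodesicWalk T Q.2)
    (hlen : L.length = 2 * k - 1)
    (hcov : ∀ v : V, ∃ Q ∈ L, ∃ w ∈ Q.2.support, T.dist v w ≤ R)
    (τ : ∀ x y : V, T.Walk x y) (hτ : ∀ x y : V, (τ x y).IsPath) :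
    ∃ P : List (V × V), IsPairing (r :: L.map Sigma.fst) P ∧
      ∀ u : V, ∃ p ∈ P, ∃ z ∈ (τ p.1 p.2).support, T.dist u z ≤ R := by
  classical
  have hconn := hT.isConnected
  set π : List V := r :: L.map Sigma.fst with hπ
  have hπeven : π.length % 2 = 0 := by
    simp only [hπ, List.length_cons, List.length_map, hlen]
    omega
  have key : ∀ n : ℕ, ∀ P : List (V × V), IsPairing π P →
      Fsum T π r ≤ Dsum T P + n →
      ∃ P' : List (V × V), IsPairing π P' ∧
        ∀ u : V, ∃ p ∈ P', ∃ z ∈ (τ p.1 p.2).support, T.dist u z ≤ R := by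
    intro n
    induction n using Nat.strong_induction_on with
    | _ n IH =>
      intro P hP hFn
      by_cases hC : ∀ u : V, ∃ p ∈ P, ∃ z ∈ (τ p.1 p.2).support, T.dist u z ≤ R
      · exact ⟨P, hP, hC⟩
      push_neg at hC
      obtain ⟨u, hu⟩ := hC
      obtain ⟨Q, hQ, w, hwQ, hdw⟩ := hcov u
      set x := Q.1 with hx
      have hwsplit : T.dist r w + T.dist w x = T.dist r x :=
        dist_add_of_mem_geo hT Q.2 (hgeo Q hQ) hwQ
      have hwnot : ∀ p ∈ P, T.dist p.1 w + T.dist w p.2 ≠ T.dist p.1 p.2 := by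
        intro p hp he
        have hlt := hu p hp w ((mem_tau_iff hT τ hτ).2 he)
        omega
      have hP' : (π : Multiset V) = flatMS (P : Multiset (V × V)) := (isPairing_iff π P).1 hP
      have hrmem : r ∈ flatMS (P : Multiset (V × V)) := by
        rw [← hP']
        exact Multiset.mem_coe.2 (List.mem_cons_self (a := r))
      obtain ⟨a, S1, hS1le, hflat1, hd1, p1, hp1, hor1⟩ := extractMS hrmem
      have hp1P : p1 ∈ P := Multiset.mem_coe.1 hp1
      have hra : T.dist r a + 1 ≤ T.dist r w + T.dist w a := by
        have h := hwnot p1 hp1P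
        have htr : T.dist r a ≤ T.dist r w + T.dist w a := hconn.dist_triangle
        have hc1 : T.dist r w = T.dist w r := T.dist_comm
        have hc2 : T.dist w a = T.dist a w := T.dist_comm
        have hc3 : T.dist r a = T.dist a r := T.dist_comm
        rcases hor1 with ⟨h1, h2⟩ | ⟨h1, h2⟩ <;> rw [← h1, ← h2] at h <;> omega
      have hxr : x ≠ r := by
        intro h
        rw [h] at hwsplit
        have hrr : T.dist r r = 0 := SimpleGraph.dist_self
        have h0 : T.dist r w = 0 := by omega
        obtain rfl : r = w := hconn.dist_eq_zero_iff.1 h0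
        omega
      have hxa : x ≠ a := by
        intro h
        rw [h] at hwsplit
        omega
      have hxS1 : x ∈ flatMS S1 := by
        have hxπ : x ∈ (π : Multiset V) := by
          refine Multiset.mem_coe.2 (List.mem_cons_of_mem _ ?_)
          exact List.mem_map_of_mem (f := Sigma.fst) hQ
        rw [hP', hflat1] at hxπ
        rcases Multiset.mem_cons.1 hxπ with h | hxπ
        · exact absurd h hxr
        rcases Multiset.mem_cons.1 hxπ with h | hxπ
        · exact absurd h hxa
        exact hxπ
      obtain ⟨b, S2, hS2le, hflat2, hd2, p2, hp2, hor2⟩ := extractMS hxS1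
      have hp2P : p2 ∈ P := Multiset.mem_coe.1 (Multiset.mem_of_le hS1le hp2)
      have hxb : T.dist x b + 1 ≤ T.dist x w + T.dist w b := by
        have h := hwnot p2 hp2P
        have htr : T.dist x b ≤ T.dist x w + T.dist w b := hconn.dist_triangle
        have hc1 : T.dist x w = T.dist w x := T.dist_comm
        have hc2 : T.dist w b = T.dist b w := T.dist_comm
        have hc3 : T.dist x b = T.dist b x := T.dist_comm
        rcases hor2 with ⟨h1, h2⟩ | ⟨h1, h2⟩ <;> rw [← h1, ← h2] at h <;> omega
      have hwrx : w ∈ (τ r x).support := (mem_tau_iff hT τ hτ).2 hwsplit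
      have hwax : w ∈ (τ a x).support := by
        rcases mem_tau_or hT τ hτ a hwrx with h | h
        · exfalso
          have := (mem_tau_iff hT τ hτ).1 h
          omega
        · exact h
      have hwab : T.dist a w + T.dist w b = T.dist a b := by
        rcases mem_tau_or hT τ hτ b hwax with h | h
        · exact (mem_tau_iff hT τ hτ).1 h
        · exfalso
          have hh := (mem_tau_iff hT τ hτ).1 h
          have hc1 : T.dist b w = T.dist w b := T.dist_comm
          have hc2 : T.dist w x = T.dist x w := T.dist_comm
          have hc3 : T.dist b x = T.dist x b := T.dist_comm
          omega
      set Pnew : List (V × V) := (r, x) :: (a, b) :: S2.toList with hPnew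
      have hcoe : (Pnew : Multiset (V × V)) = (r, x) ::ₘ (a, b) ::ₘ S2 := by
        simp only [hPnew, ← Multiset.cons_coe, Multiset.coe_toList]
      have hpairN : IsPairing π Pnew := by
        rw [isPairing_iff, hcoe, flatMS_cons, flatMS_cons, hP', hflat1, hflat2]
        exact congrArg _ (Multiset.cons_swap a x _)
      have hdN : Dsum T Pnew = T.dist r x + (T.dist a b + dMS T S2) := by
        rw [dsum_eq, hcoe, dMS_cons, dMS_cons]
      have hdP : Dsum T P = T.dist r a + (T.dist x b + dMS T S2) := by
        rw [dsum_eq, hd1, hd2]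
      have hbound : Dsum T Pnew ≤ Fsum T π r := by
        rw [dsum_eq]
        have hle := dMS_le hT r (Pnew : Multiset (V × V))
        rw [isPairing_iff] at hpairN
        rw [← hpairN] at hle
        simpa [Fsum] using hle
      have hgain : Dsum T P + 2 ≤ Dsum T Pnew := by
        rw [hdN, hdP]
        have hc1 : T.dist w a = T.dist a w := T.dist_comm
        have hc2 : T.dist x w = T.dist w x := T.dist_comm
        omega
      exact IH (n - 2) (by omega) Pnew hpairN (by omega)
  exact key (Fsum T π r) (pairUp π) (pairUp_spec π hπeven) (by omega)
end
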